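/- arXiv:1509.03358 — 5 statements merged into one kernel-verified Lean document; each statement's English description precedes it below -/
import Mathlib

section
/- For every integer n ≥ 1 and every complex number r with |r| < 1, one has (1/n) · ∑_{m=1}^{n} r·e^{2πim/n}/(1 − r·e^{2πim/n}) = r^n/(1 − r^n). (Note that the denominators are nonzero since |r·e^{2πim/n}| = |r| < 1.) -/
/-- For `n ≥ 1` and `|r| < 1`,
`(1/n) ∑_{m=1}^n r·e^{2πim/n}/(1 − r·e^{2πim/n}) = rⁿ/(1 − rⁿ)`. -/
theorem stmt2 (n : ℕ) (hn : 1 ≤ n) (r : ℂ) (hr : ‖r‖ < 1) :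
    (1 / (n : ℂ)) * ∑ m ∈ Finset.Icc 1 n,
        r * Complex.exp (2 * (Real.pi : ℂ) * Complex.I * m / n) /
          (1 - r * Complex.exp (2 * (Real.pi : ℂ) * Complex.I * m / n)) =
      r ^ n / (1 - r ^ n) := by
  have hnpos : 0 < n := hn
  have hn0 : (n : ℂ) ≠ 0 := Nat.cast_ne_zero.2 hnpos.ne'
  set ζ : ℂ := Complex.exp (2 * (Real.pi : ℂ) * Complex.I / n) with hζdef
  have hprim : IsPrimitiveRoot ζ n := by
    have h := Complex.isPrimitiveRoot_exp n hnpos.ne'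
    have : Complex.exp (2 * Real.pi * Complex.I / n) = ζ := by rw [hζdef]
    rwa [this] at h
  have hζn : ζ ^ n = 1 := hprim.pow_eq_one
  have habs : ‖ζ‖ = 1 := by
    have h1 : 2 * (Real.pi : ℂ) * Complex.I / n = ((2 * Real.pi / n : ℝ) : ℂ) * Complex.I := by
      push_cast; ring
    rw [hζdef, h1, Complex.norm_exp_ofReal_mul_I]
  have hexp : ∀ m : ℕ, Complex.exp (2 * (Real.pi : ℂ) * Complex.I * m / n) = ζ ^ m := by
    intro m
    rw [hζdef, ← Complex.exp_nat_mul]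
    ring_nf
  have habsx : ∀ m : ℕ, ‖r * ζ ^ m‖ = ‖r‖ := by
    intro m
    rw [norm_mul, norm_pow, habs, one_pow, mul_one]
  have hne : ∀ m : ℕ, 1 - r * ζ ^ m ≠ 0 := by
    intro m hcontra
    have h1 : r * ζ ^ m = 1 := by linear_combination -hcontra
    have := habsx m
    rw [h1, norm_one] at this
    linarith
  have hrn : 1 - r ^ n ≠ 0 := by
    intro hcontra
    have h1 : r ^ n = 1 := by linear_combination -hcontra
    have : ‖r‖ ^ n < 1 := pow_lt_one₀ (norm_nonneg r) hr hnpos.ne'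
    rw [← norm_pow, h1, norm_one] at this
    linarith
  have key : ∀ m : ℕ, r * ζ ^ m / (1 - r * ζ ^ m)
      = (∑ k ∈ Finset.range n, (r * ζ ^ m) ^ (k + 1)) / (1 - r ^ n) := by
    intro m
    set x : ℂ := r * ζ ^ m with hxdef
    rw [div_eq_div_iff (hne m) hrn]
    have hx : x ^ n = r ^ n := by
      rw [hxdef, mul_pow, ← pow_mul, mul_comm m n, pow_mul, hζn, one_pow, mul_one]
    have hsum1 : ∑ k ∈ Finset.range n, x ^ (k + 1) = x * ∑ k ∈ Finset.range n, x ^ k := by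
      rw [Finset.mul_sum]
      exact Finset.sum_congr rfl fun k _ => by ring
    rw [hsum1]
    have hG := geom_sum_mul x n
    linear_combination x * hG + x * hx
  have inner : ∀ k ∈ Finset.range n,
      ∑ m ∈ Finset.Icc 1 n, (r * ζ ^ m) ^ (k + 1)
        = if k = n - 1 then (n : ℂ) * r ^ n else 0 := by
    intro k hk
    rw [Finset.mem_range] at hk
    by_cases hkn : k = n - 1
    · have hk1 : k + 1 = n := by omega
      rw [if_pos hkn]
      have : ∀ m ∈ Finset.Icc 1 n, (r * ζ ^ m) ^ (k + 1) = r ^ n := by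
        intro m _
        rw [hk1, mul_pow, ← pow_mul, mul_comm m n, pow_mul, hζn, one_pow, mul_one]
      rw [Finset.sum_congr rfl this, Finset.sum_const, Nat.card_Icc]
      simp [nsmul_eq_mul]
    · rw [if_neg hkn]
      set w : ℂ := ζ ^ (k + 1) with hwdef
      have hw1 : w ≠ 1 := hprim.pow_ne_one_of_pos_of_lt (by omega) (by omega)
      have hwn : w ^ n = 1 := by
        rw [hwdef, ← pow_mul, mul_comm, pow_mul, hζn, one_pow]
      have hterm : ∀ m : ℕ, (r * ζ ^ m) ^ (k + 1) = r ^ (k + 1) * w ^ m := by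
        intro m
        rw [hwdef, mul_pow, ← pow_mul, mul_comm m (k + 1), pow_mul]
      have hsumw : ∑ m ∈ Finset.Icc 1 n, w ^ m = 0 := by
        rw [← Finset.Ico_add_one_right_eq_Icc, Finset.sum_Ico_eq_sum_range]
        have : ∀ i ∈ Finset.range (n + 1 - 1), w ^ (1 + i) = w * w ^ i := by
          intro i _; rw [pow_add, pow_one]
        rw [Finset.sum_congr rfl this, ← Finset.mul_sum]
        have : n + 1 - 1 = n := by omega
        rw [this, geom_sum_eq hw1, hwn]
        simp
      calc ∑ m ∈ Finset.Icc 1 n, (r * ζ ^ m) ^ (k + 1)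
          = ∑ m ∈ Finset.Icc 1 n, r ^ (k + 1) * w ^ m :=
            Finset.sum_congr rfl fun m _ => hterm m
        _ = r ^ (k + 1) * ∑ m ∈ Finset.Icc 1 n, w ^ m := by rw [Finset.mul_sum]
        _ = 0 := by rw [hsumw, mul_zero]
  have hmain : ∑ m ∈ Finset.Icc 1 n,
      r * Complex.exp (2 * (Real.pi : ℂ) * Complex.I * m / n) /
        (1 - r * Complex.exp (2 * (Real.pi : ℂ) * Complex.I * m / n))
      = (n : ℂ) * r ^ n / (1 - r ^ n) := by
    calc ∑ m ∈ Finset.Icc 1 n,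
        r * Complex.exp (2 * (Real.pi : ℂ) * Complex.I * m / n) /
          (1 - r * Complex.exp (2 * (Real.pi : ℂ) * Complex.I * m / n))
        = ∑ m ∈ Finset.Icc 1 n, r * ζ ^ m / (1 - r * ζ ^ m) := by
          refine Finset.sum_congr rfl fun m _ => ?_
          rw [hexp m]
      _ = ∑ m ∈ Finset.Icc 1 n,
            (∑ k ∈ Finset.range n, (r * ζ ^ m) ^ (k + 1)) / (1 - r ^ n) :=
          Finset.sum_congr rfl fun m _ => key m
      _ = (∑ m ∈ Finset.Icc 1 n, ∑ k ∈ Finset.range n, (r * ζ ^ m) ^ (k + 1)) / (1 - r ^ n) := by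
          rw [Finset.sum_div]
      _ = (∑ k ∈ Finset.range n, ∑ m ∈ Finset.Icc 1 n, (r * ζ ^ m) ^ (k + 1)) / (1 - r ^ n) := by
          rw [Finset.sum_comm]
      _ = (∑ k ∈ Finset.range n, if k = n - 1 then (n : ℂ) * r ^ n else 0) / (1 - r ^ n) := by
          rw [Finset.sum_congr rfl inner]
      _ = (n : ℂ) * r ^ n / (1 - r ^ n) := by
          rw [Finset.sum_ite_eq' (Finset.range n) (n - 1) (fun _ => (n : ℂ) * r ^ n)]
          rw [if_pos (Finset.mem_range.2 (by omega))]
  rw [hmain]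
  field_simp
end

section
/- Let A be a unital associative algebra over ℂ, let T ∈ A, let n ≥ 1 be an integer and let r be a real number with 0 < r < 1. Assume that for every k ∈ {1, …, n} the elements r·e^{2πik/n}·1 − T and e^{2πik/n}·1 − T are invertible in A. Define E_n = (1/n) ∑_{k=1}^{n} r·e^{2πik/n} · (r·e^{2πik/n}·1 − T)^{-1} and F_n = (1/n) ∑_{l=1}^{n} e^{2πil/n} · (e^{2πil/n}·1 − T)^{-1}. Then E_n F_n = F_n E_n = (1/(1 − r^n))·E_n − (r^n/(1 − r^n))·F_n. -/
/-- The `k`-th point `e^{2πik/n}` on the unit circle among the `n`-th roots of unity. -/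
noncomputable def rootFn (n k : ℕ) : ℂ :=
  Complex.exp (2 * (Real.pi : ℂ) * Complex.I * k / n)

lemma rootFn_eq_pow (n k : ℕ) : rootFn n k = rootFn n 1 ^ k := by
  unfold rootFn
  rw [← Complex.exp_nat_mul]
  congr 1
  push_cast
  ring

lemma rootFn_pow_n {n : ℕ} (hn : n ≠ 0) (k : ℕ) : rootFn n k ^ n = 1 := by
  unfold rootFn
  rw [← Complex.exp_nat_mul]
  have h : (n:ℂ) * (2 * (Real.pi : ℂ) * Complex.I * k / n) = k * (2 * Real.pi * Complex.I) := by
    have : (n:ℂ) ≠ 0 := Nat.cast_ne_zero.mpr hn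
    field_simp
  rw [h]
  simp [Complex.exp_int_mul_two_pi_mul_I k]

lemma rootFn_ne_zero (n k : ℕ) : rootFn n k ≠ 0 := Complex.exp_ne_zero _

lemma isPrimitiveRoot_rootFn {n : ℕ} (hn : n ≠ 0) : IsPrimitiveRoot (rootFn n 1) n := by
  have := Complex.isPrimitiveRoot_exp n hn
  unfold rootFn
  simpa using this

lemma sum_rootFn_pow {n : ℕ} (hn : n ≠ 0) (m : ℕ) :
    ∑ k ∈ Finset.Icc 1 n, rootFn n k ^ m = if n ∣ m then (n:ℂ) else 0 := by
  have hprim := isPrimitiveRoot_rootFn hn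
  set ω := rootFn n 1 with hω
  have hsum : ∑ k ∈ Finset.Icc 1 n, rootFn n k ^ m
      = ∑ k ∈ Finset.range n, (ω ^ m) ^ (1 + k) := by
    rw [← Finset.Ico_add_one_right_eq_Icc, Finset.sum_Ico_eq_sum_range, Nat.add_sub_cancel]
    refine Finset.sum_congr rfl fun k _ => ?_
    rw [rootFn_eq_pow, ← pow_mul, ← pow_mul, Nat.mul_comm]
  rw [hsum]
  by_cases hd : n ∣ m
  · have h1 : ω ^ m = 1 := (hprim.pow_eq_one_iff_dvd m).mpr hd
    simp [h1, hd]
  · have h1 : ω ^ m ≠ 1 := fun h => hd ((hprim.pow_eq_one_iff_dvd m).mp h)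
    have h2 : ∑ k ∈ Finset.range n, (ω ^ m) ^ (1 + k)
        = (ω ^ m) * ∑ k ∈ Finset.range n, (ω ^ m) ^ k := by
      rw [Finset.mul_sum]
      exact Finset.sum_congr rfl fun k _ => by rw [pow_add, pow_one]
    rw [h2, geom_sum_eq h1]
    have : (ω ^ m) ^ n = 1 := by
      rw [← pow_mul, mul_comm, pow_mul, hprim.pow_eq_one, one_pow]
    rw [this]
    simp [hd]

lemma key_sum {n : ℕ} (hn : n ≠ 0) {c : ℂ} (hc : c ^ n ≠ 1) :
    ∑ k ∈ Finset.Icc 1 n, rootFn n k / (c - rootFn n k) = n / (c ^ n - 1) := by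
  have hc1 : c ^ n - 1 ≠ 0 := sub_ne_zero.mpr hc
  have hterm : ∀ k ∈ Finset.Icc 1 n, rootFn n k / (c - rootFn n k)
      = (∑ j ∈ Finset.range n, c ^ j * rootFn n k ^ (n - j)) / (c ^ n - 1) := by
    intro k _
    have hω : rootFn n k ^ n = 1 := rootFn_pow_n hn k
    have hne : c - rootFn n k ≠ 0 := by
      intro h
      rw [sub_eq_zero] at h
      exact hc (by rw [h, hω])
    rw [div_eq_div_iff hne hc1]
    have h2 : ∑ j ∈ Finset.range n, c ^ j * rootFn n k ^ (n - j)
        = rootFn n k * ∑ j ∈ Finset.range n, c ^ j * rootFn n k ^ (n - 1 - j) := by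
      rw [Finset.mul_sum]
      refine Finset.sum_congr rfl fun j hj => ?_
      have hj' : j < n := Finset.mem_range.mp hj
      have he : n - j = (n - 1 - j) + 1 := by omega
      rw [he, pow_succ]; ring
    rw [h2, mul_assoc, geom_sum₂_mul, hω]
  rw [Finset.sum_congr rfl hterm, ← Finset.sum_div]
  congr 1
  rw [Finset.sum_comm]
  have h3 : ∀ j ∈ Finset.range n, ∑ k ∈ Finset.Icc 1 n, c ^ j * rootFn n k ^ (n - j)
      = c ^ j * (if n ∣ (n - j) then (n:ℂ) else 0) := fun j _ => by
    rw [← Finset.mul_sum, sum_rootFn_pow hn]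
  rw [Finset.sum_congr rfl h3, Finset.sum_eq_single 0]
  · simp
  · intro j hj hj0
    have hj' : j < n := Finset.mem_range.mp hj
    have hnd : ¬ n ∣ (n - j) := by
      intro h
      have := Nat.le_of_dvd (by omega) h
      omega
    simp [hnd]
  · intro h
    exact absurd (Finset.mem_range.mpr (Nat.pos_of_ne_zero hn)) h

lemma resolvent_prod {A : Type*} [Ring A] [Algebra ℂ A] (T : A) {a b : ℂ}
    (ha : IsUnit (a • (1:A) - T)) (hb : IsUnit (b • (1:A) - T)) (hab : a ≠ b) :
    Ring.inverse (a • (1:A) - T) * Ring.inverse (b • (1:A) - T)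
      = (b - a)⁻¹ • (Ring.inverse (a • (1:A) - T) - Ring.inverse (b • (1:A) - T)) := by
  set u := a • (1:A) - T with hu
  set v := b • (1:A) - T with hv
  have h1 : Ring.inverse u * u = 1 := Ring.inverse_mul_cancel u ha
  have h2 : v * Ring.inverse v = 1 := Ring.mul_inverse_cancel v hb
  have hkey : Ring.inverse u - Ring.inverse v = (b - a) • (Ring.inverse u * Ring.inverse v) := by
    have : Ring.inverse u - Ring.inverse v
        = Ring.inverse u * (v * Ring.inverse v) - (Ring.inverse u * u) * Ring.inverse v := by
      rw [h1, h2, mul_one, one_mul]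
    rw [this]
    have hvu : v - u = (b - a) • (1:A) := by
      rw [hu, hv, sub_sub_sub_cancel_right, ← sub_smul]
    calc Ring.inverse u * (v * Ring.inverse v) - Ring.inverse u * u * Ring.inverse v
        = Ring.inverse u * ((v - u) * Ring.inverse v) := by
          noncomm_ring
      _ = (b - a) • (Ring.inverse u * Ring.inverse v) := by
          rw [hvu, smul_mul_assoc, one_mul, mul_smul_comm]
  rw [hkey, smul_smul, inv_mul_cancel₀ (sub_ne_zero.mpr (Ne.symm hab)), one_smul]

lemma resolvent_comm {A : Type*} [Ring A] [Algebra ℂ A] (T : A) {a b : ℂ}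
    (ha : IsUnit (a • (1:A) - T)) (hb : IsUnit (b • (1:A) - T)) (hab : a ≠ b) :
    Ring.inverse (a • (1:A) - T) * Ring.inverse (b • (1:A) - T)
      = Ring.inverse (b • (1:A) - T) * Ring.inverse (a • (1:A) - T) := by
  rw [resolvent_prod T ha hb hab, resolvent_prod T hb ha hab.symm]
  rw [show (a - b)⁻¹ = -((b - a)⁻¹) by rw [← neg_sub b a, ← neg_inv], neg_smul, ← smul_neg, neg_sub]

lemma main_aux {A : Type*} [Ring A] [Algebra ℂ A] (T : A) (n : ℕ) (hn : 1 ≤ n)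
    (r : ℝ) (hr0 : 0 < r) (hr1 : r < 1)
    (hinv1 : ∀ k ∈ Finset.Icc 1 n, IsUnit (((r : ℂ) * rootFn n k) • (1 : A) - T))
    (hinv2 : ∀ k ∈ Finset.Icc 1 n, IsUnit ((rootFn n k) • (1 : A) - T)) :
    ((1 / (n : ℂ)) • ∑ k ∈ Finset.Icc 1 n,
      ((r : ℂ) * rootFn n k) • Ring.inverse (((r : ℂ) * rootFn n k) • (1 : A) - T)) *
    ((1 / (n : ℂ)) • ∑ l ∈ Finset.Icc 1 n,
      (rootFn n l) • Ring.inverse ((rootFn n l) • (1 : A) - T))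
    = (1 / (1 - (r : ℂ) ^ n)) • ((1 / (n : ℂ)) • ∑ k ∈ Finset.Icc 1 n,
        ((r : ℂ) * rootFn n k) • Ring.inverse (((r : ℂ) * rootFn n k) • (1 : A) - T))
      - ((r : ℂ) ^ n / (1 - (r : ℂ) ^ n)) • ((1 / (n : ℂ)) • ∑ l ∈ Finset.Icc 1 n,
        (rootFn n l) • Ring.inverse ((rootFn n l) • (1 : A) - T)) := by
  have hn0 : n ≠ 0 := by omega
  have hnz : (n : ℂ) ≠ 0 := Nat.cast_ne_zero.mpr hn0
  have hrc : (r : ℂ) ≠ 0 := by exact_mod_cast hr0.ne'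
  have hrnR : r ^ n < 1 := pow_lt_one₀ hr0.le hr1 hn0
  have hrn1 : (r : ℂ) ^ n ≠ 1 := by
    intro h
    rw [← Complex.ofReal_pow] at h
    exact absurd (by exact_mod_cast h) hrnR.ne
  have hs0 : (1 : ℂ) - (r : ℂ) ^ n ≠ 0 := sub_ne_zero.mpr (Ne.symm hrn1)
  have hrn0 : (r : ℂ) ^ n ≠ 0 := pow_ne_zero n hrc
  have hnorm : ∀ k, ‖rootFn n k‖ = 1 := fun k =>
    Complex.norm_eq_one_of_pow_eq_one (rootFn_pow_n hn0 k) hn0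
  have hab : ∀ k l : ℕ, (r : ℂ) * rootFn n k ≠ rootFn n l := by
    intro k l h
    have h1 : ‖(r : ℂ) * rootFn n k‖ = r := by
      rw [norm_mul, hnorm, mul_one, Complex.norm_real, Real.norm_eq_abs, abs_of_pos hr0]
    rw [h, hnorm] at h1
    exact hr1.ne' h1
  have hapow : ∀ k : ℕ, ((r : ℂ) * rootFn n k) ^ n = (r : ℂ) ^ n := fun k => by
    rw [mul_pow, rootFn_pow_n hn0, mul_one]
  -- scalar sum over l, fixed k
  have S1 : ∀ k : ℕ, ∑ l ∈ Finset.Icc 1 n,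
      ((r : ℂ) * rootFn n k * rootFn n l) * (rootFn n l - (r : ℂ) * rootFn n k)⁻¹
      = ((n : ℂ) / (1 - (r : ℂ) ^ n)) * ((r : ℂ) * rootFn n k) := by
    intro k
    set a := (r : ℂ) * rootFn n k with ha
    have hkey := key_sum hn0 (c := a) (by rw [hapow]; exact hrn1)
    have hstep : ∀ l ∈ Finset.Icc 1 n,
        (a * rootFn n l) * (rootFn n l - a)⁻¹ = (-a) * (rootFn n l / (a - rootFn n l)) := by
      intro l _
      have hne : a - rootFn n l ≠ 0 := sub_ne_zero.mpr (hab k l)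
      have hne' : rootFn n l - a ≠ 0 := sub_ne_zero.mpr (Ne.symm (hab k l))
      field_simp
      ring
    rw [Finset.sum_congr rfl hstep, ← Finset.mul_sum, hkey, hapow]
    have hs1 : (r : ℂ) ^ n - 1 ≠ 0 := sub_ne_zero.mpr hrn1
    field_simp [hs1]
    ring
  -- scalar sum over k, fixed l
  have S2 : ∀ l : ℕ, ∑ k ∈ Finset.Icc 1 n,
      ((r : ℂ) * rootFn n k * rootFn n l) * (rootFn n l - (r : ℂ) * rootFn n k)⁻¹
      = ((n : ℂ) * (r : ℂ) ^ n / (1 - (r : ℂ) ^ n)) * rootFn n l := by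
    intro l
    set b := rootFn n l with hb
    have hcpow : (b / (r : ℂ)) ^ n = 1 / (r : ℂ) ^ n := by
      rw [div_pow, hb, rootFn_pow_n hn0]
    have hcn : (b / (r : ℂ)) ^ n ≠ 1 := by
      rw [hcpow]
      intro h
      exact hrn1 (by field_simp at h; rw [h])
    have hkey := key_sum hn0 hcn
    have hstep : ∀ k ∈ Finset.Icc 1 n,
        ((r : ℂ) * rootFn n k * b) * (b - (r : ℂ) * rootFn n k)⁻¹
        = b * (rootFn n k / (b / (r : ℂ) - rootFn n k)) := by
      intro k _
      have hne : b - (r : ℂ) * rootFn n k ≠ 0 := sub_ne_zero.mpr (Ne.symm (hab k l))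
      have hne2 : b / (r : ℂ) - rootFn n k ≠ 0 := by
        refine sub_ne_zero.mpr fun h => hab k l ?_
        rw [← hb, (div_eq_iff hrc).mp h, mul_comm]
      field_simp
    rw [Finset.sum_congr rfl hstep, ← Finset.mul_sum, hkey, hcpow]
    have h4 : (1 : ℂ) / (r : ℂ) ^ n - 1 = (1 - (r : ℂ) ^ n) / (r : ℂ) ^ n := by
      field_simp
    rw [h4, div_div_eq_mul_div]
    ring
  -- algebra part
  rw [smul_mul_smul_comm, Finset.sum_mul_sum]
  have hterm : ∀ k ∈ Finset.Icc 1 n, ∀ l ∈ Finset.Icc 1 n,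
      (((r : ℂ) * rootFn n k) • Ring.inverse (((r : ℂ) * rootFn n k) • (1 : A) - T)) *
        ((rootFn n l) • Ring.inverse ((rootFn n l) • (1 : A) - T))
      = (((r : ℂ) * rootFn n k * rootFn n l) * (rootFn n l - (r : ℂ) * rootFn n k)⁻¹) •
          Ring.inverse (((r : ℂ) * rootFn n k) • (1 : A) - T)
        - (((r : ℂ) * rootFn n k * rootFn n l) * (rootFn n l - (r : ℂ) * rootFn n k)⁻¹) •
          Ring.inverse ((rootFn n l) • (1 : A) - T) := by
    intro k hk l hl
    rw [smul_mul_smul_comm, resolvent_prod T (hinv1 k hk) (hinv2 l hl) (hab k l),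
      smul_smul, smul_sub]
  calc (1 / (n : ℂ) * (1 / (n : ℂ))) • ∑ k ∈ Finset.Icc 1 n, ∑ l ∈ Finset.Icc 1 n,
        (((r : ℂ) * rootFn n k) • Ring.inverse (((r : ℂ) * rootFn n k) • (1 : A) - T)) *
        ((rootFn n l) • Ring.inverse ((rootFn n l) • (1 : A) - T))
      = (1 / (n : ℂ) * (1 / (n : ℂ))) •
        (∑ k ∈ Finset.Icc 1 n, (((n : ℂ) / (1 - (r : ℂ) ^ n)) * ((r : ℂ) * rootFn n k)) •
            Ring.inverse (((r : ℂ) * rootFn n k) • (1 : A) - T)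
          - ∑ l ∈ Finset.Icc 1 n, (((n : ℂ) * (r : ℂ) ^ n / (1 - (r : ℂ) ^ n)) * rootFn n l) •
            Ring.inverse ((rootFn n l) • (1 : A) - T)) := by
        congr 1
        rw [Finset.sum_congr rfl (fun k hk => Finset.sum_congr rfl (hterm k hk))]
        rw [Finset.sum_congr rfl (fun k _ => Finset.sum_sub_distrib _ _)]
        rw [Finset.sum_sub_distrib]
        congr 1
        · exact Finset.sum_congr rfl fun k _ => by rw [← Finset.sum_smul, S1 k]
        · rw [Finset.sum_comm]
          exact Finset.sum_congr rfl fun l _ => by rw [← Finset.sum_smul, S2 l]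
    _ = _ := by
        rw [smul_sub]
        congr 1
        · rw [Finset.smul_sum, Finset.smul_sum, Finset.smul_sum]
          refine Finset.sum_congr rfl fun k _ => ?_
          rw [smul_smul, smul_smul, smul_smul]
          congr 1
          field_simp
        · rw [Finset.smul_sum, Finset.smul_sum, Finset.smul_sum]
          refine Finset.sum_congr rfl fun l _ => ?_
          rw [smul_smul, smul_smul, smul_smul]
          congr 1
          field_simp

/-- The product formula `EₙFₙ = FₙEₙ = (1/(1−rⁿ))Eₙ − (rⁿ/(1−rⁿ))Fₙ` for the Riemann
sums of the Haagerup–Schultz contour-integral idempotents over circles of radii `r < 1`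
and `1` centered at `0`. -/
theorem stmt3 {A : Type*} [Ring A] [Algebra ℂ A] (T : A) (n : ℕ) (hn : 1 ≤ n)
    (r : ℝ) (hr0 : 0 < r) (hr1 : r < 1)
    (hinv1 : ∀ k ∈ Finset.Icc 1 n, IsUnit (((r : ℂ) * rootFn n k) • (1 : A) - T))
    (hinv2 : ∀ k ∈ Finset.Icc 1 n, IsUnit ((rootFn n k) • (1 : A) - T)) :
    let E : A := (1 / (n : ℂ)) • ∑ k ∈ Finset.Icc 1 n,
      ((r : ℂ) * rootFn n k) • Ring.inverse (((r : ℂ) * rootFn n k) • (1 : A) - T)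
    let F : A := (1 / (n : ℂ)) • ∑ l ∈ Finset.Icc 1 n,
      (rootFn n l) • Ring.inverse ((rootFn n l) • (1 : A) - T)
    E * F = (1 / (1 - (r : ℂ) ^ n)) • E - ((r : ℂ) ^ n / (1 - (r : ℂ) ^ n)) • F ∧
      F * E = (1 / (1 - (r : ℂ) ^ n)) • E - ((r : ℂ) ^ n / (1 - (r : ℂ) ^ n)) • F := by
  intro E F
  have hn0 : n ≠ 0 := by omega
  have hab : ∀ k l : ℕ, (r : ℂ) * rootFn n k ≠ rootFn n l := by
    intro k l h
    have hnorm : ∀ k, ‖rootFn n k‖ = 1 := fun k =>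
      Complex.norm_eq_one_of_pow_eq_one (rootFn_pow_n hn0 k) hn0
    have h1 : ‖(r : ℂ) * rootFn n k‖ = r := by
      rw [norm_mul, hnorm, mul_one, Complex.norm_real, Real.norm_eq_abs, abs_of_pos hr0]
    rw [h, hnorm] at h1
    exact hr1.ne' h1
  have h1 := main_aux T n hn r hr0 hr1 hinv1 hinv2
  refine ⟨h1, ?_⟩
  have hcomm : F * E = E * F := by
    show ((1 / (n : ℂ)) • _) * ((1 / (n : ℂ)) • _) = ((1 / (n : ℂ)) • _) * ((1 / (n : ℂ)) • _)
    rw [smul_mul_smul_comm, smul_mul_smul_comm, Finset.sum_mul_sum, Finset.sum_mul_sum,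
      Finset.sum_comm]
    congr 1
    refine Finset.sum_congr rfl fun k hk => Finset.sum_congr rfl fun l hl => ?_
    rw [smul_mul_smul_comm, smul_mul_smul_comm,
      resolvent_comm T (hinv2 l hl) (hinv1 k hk) (Ne.symm (hab k l)), mul_comm]
  rw [hcomm]
  exact h1
end

section
/- Let x : (0,1] → ℝ be a nonincreasing function with x(t) > 0 for all t, and suppose that s ↦ log(x(s)) is Lebesgue integrable on (0,1). Define S : (0,1] → ℝ by S(t) = x(t)·(1 + (1/t)·∫_0^t log(x(s)/x(t)) ds). Then s ↦ log(S(s)) is integrable on (0,1) and, for every t ∈ (0,1], ∫_0^t log(S(s)) ds ≤ ∫_0^t log(4·x(s/2)) ds. -/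
open MeasureTheory Set

private lemma stmt7_neg_log_le_aux {s : ℝ} (hs : 0 < s) : -Real.log s ≤ 2 * s ^ (-(1/2) : ℝ) := by
  have h1 : Real.log s = 2 * Real.log (Real.sqrt s) := by
    rw [Real.log_sqrt hs.le]; ring
  have h2 : Real.log (Real.sqrt s)⁻¹ ≤ (Real.sqrt s)⁻¹ - 1 :=
    Real.log_le_sub_one_of_pos (by positivity)
  rw [Real.log_inv] at h2
  have h3 : (Real.sqrt s)⁻¹ = s ^ (-(1/2) : ℝ) := by
    rw [Real.sqrt_eq_rpow, ← Real.rpow_neg hs.le]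
  nlinarith [h2, h3]

private lemma stmt7_integrableOn_rpow_half {t : ℝ} (ht : 0 ≤ t) :
    IntegrableOn (fun s : ℝ => s ^ (-(1/2) : ℝ)) (Set.Ioc 0 t) := by
  have := intervalIntegral.intervalIntegrable_rpow' (a := 0) (b := t)
    (r := (-(1/2) : ℝ)) (by norm_num)
  rwa [intervalIntegrable_iff_integrableOn_Ioc_of_le ht] at this

private lemma stmt7_integrableOn_log_Ioc {t : ℝ} (ht : 0 < t) (ht1 : t ≤ 1) :
    IntegrableOn Real.log (Set.Ioc 0 t) := by
  refine Integrable.mono' ((stmt7_integrableOn_rpow_half ht.le).const_mul 2)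
    (Real.measurable_log.aestronglyMeasurable) ?_
  rw [ae_restrict_iff' measurableSet_Ioc]
  refine Filter.Eventually.of_forall (fun s hs => ?_)
  have h0 : Real.log s ≤ 0 := Real.log_nonpos hs.1.le (hs.2.trans ht1)
  rw [Real.norm_eq_abs, abs_of_nonpos h0]
  exact stmt7_neg_log_le_aux hs.1

private lemma stmt7_integrableOn_log_add {c t : ℝ} (hc : 0 < c) (ht : 0 ≤ t) :
    IntegrableOn (fun s : ℝ => Real.log (s + c)) (Set.Ioc 0 t) := by
  have hcont : ContinuousOn (fun s : ℝ => Real.log (s + c)) (Set.Icc 0 t) := by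
    apply ContinuousOn.log ((continuous_id.add continuous_const).continuousOn)
    intro x hx
    have := hx.1
    show x + c ≠ 0
    positivity
  exact (hcont.integrableOn_Icc).mono_set Ioc_subset_Icc_self

private lemma stmt7_integrableOn_log_one_add_div {c t : ℝ} (hc : 0 ≤ c) (ht : 0 < t)
    (ht1 : t ≤ 1) :
    IntegrableOn (fun s : ℝ => Real.log (1 + c / s)) (Set.Ioc 0 t) := by
  rcases eq_or_lt_of_le hc with h | h
  · have : EqOn (fun s : ℝ => Real.log (1 + c / s)) (fun _ => 0) (Set.Ioc 0 t) := by
      intro s hs; simp [← h]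
    exact (integrableOn_congr_fun this measurableSet_Ioc).2 (integrableOn_const measure_Ioc_lt_top.ne)
  · have heq : EqOn (fun s : ℝ => Real.log (1 + c / s))
        (fun s => Real.log (s + c) - Real.log s) (Set.Ioc 0 t) := by
      intro s hs
      have hs0 : s ≠ 0 := ne_of_gt hs.1
      have hs1 : 0 < s := hs.1
      have h2 : (1 : ℝ) + c / s = (s + c) / s := by field_simp
      show Real.log (1 + c / s) = _
      rw [h2, Real.log_div (by positivity) hs0]
    exact (integrableOn_congr_fun heq measurableSet_Ioc).2
      ((stmt7_integrableOn_log_add h ht.le).sub (stmt7_integrableOn_log_Ioc ht ht1))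

private lemma stmt7_integral_log_one_add_div_le {c t : ℝ} (hc : 0 ≤ c) (ht : 0 < t)
    (ht1 : t ≤ 1) :
    ∫ s in Set.Ioc (0:ℝ) t, Real.log (1 + c / s) ≤ c + t := by
  rcases eq_or_lt_of_le hc with h | h
  · have : EqOn (fun s : ℝ => Real.log (1 + c / s)) (fun _ => 0) (Set.Ioc 0 t) := by
      intro s hs; simp [← h]
    rw [setIntegral_congr_fun measurableSet_Ioc this]
    simp; positivity
  · set P : ℝ → ℝ := fun s => (s + c) * Real.log (s + c) - s * Real.log s with hP
    have hcont : ContinuousOn P (Set.Icc 0 t) := by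
      apply Continuous.continuousOn
      exact ((Real.continuous_mul_log.comp (continuous_id.add continuous_const))).sub
        Real.continuous_mul_log
    have hderiv : ∀ s ∈ Set.Ioo (0:ℝ) t, HasDerivAt P (Real.log (s + c) - Real.log s) s := by
      intro s hs
      have hs1 : 0 < s := hs.1
      have h1 : HasDerivAt (fun s : ℝ => (s + c) * Real.log (s + c))
          (Real.log (s + c) + 1) s := by
        have := (Real.hasDerivAt_mul_log (x := s + c) (by positivity)).comp s
          ((hasDerivAt_id s).add_const c)
        simpa [Function.comp_def] using this
      have h2 : HasDerivAt (fun s : ℝ => s * Real.log s) (Real.log s + 1) s :=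
        Real.hasDerivAt_mul_log (ne_of_gt hs.1)
      have := h1.sub h2
      simp only [add_sub_add_right_eq_sub] at this
      exact this
    have hii : IntervalIntegrable (fun s => Real.log (s + c) - Real.log s) volume 0 t := by
      rw [intervalIntegrable_iff_integrableOn_Ioc_of_le ht.le]
      exact (stmt7_integrableOn_log_add h ht.le).sub (stmt7_integrableOn_log_Ioc ht ht1)
    have hftc := intervalIntegral.integral_eq_sub_of_hasDerivAt_of_le ht.le hcont hderiv hii
    have heq : ∫ s in Set.Ioc (0:ℝ) t, Real.log (1 + c / s)
        = ∫ s in Set.Ioc (0:ℝ) t, (Real.log (s + c) - Real.log s) := by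
      apply setIntegral_congr_fun measurableSet_Ioc
      intro s hs
      have hs1 : 0 < s := hs.1
      have h2 : (1 : ℝ) + c / s = (s + c) / s := by field_simp
      show Real.log (1 + c / s) = _
      rw [h2, Real.log_div (by positivity) (ne_of_gt hs1)]
    rw [heq, ← intervalIntegral.integral_of_le ht.le, hftc]
    have hPtP0 : P t - P 0 = t * (Real.log (t + c) - Real.log t)
        + c * (Real.log (t + c) - Real.log c) := by
      simp only [hP]
      simp
      ring
    rw [hPtP0]
    have b1 : Real.log (t + c) - Real.log t ≤ c / t := by
      have h3 : Real.log ((t + c)/t) ≤ (t + c)/t - 1 := Real.log_le_sub_one_of_pos (by positivity)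
      rw [Real.log_div (by positivity) (ne_of_gt ht)] at h3
      have h4 : (t + c)/t - 1 = c / t := by field_simp; ring
      linarith
    have b2 : Real.log (t + c) - Real.log c ≤ t / c := by
      have h3 : Real.log ((t + c)/c) ≤ (t + c)/c - 1 := Real.log_le_sub_one_of_pos (by positivity)
      rw [Real.log_div (by positivity) (ne_of_gt h)] at h3
      have h4 : (t + c)/c - 1 = t / c := by field_simp; ring
      linarith
    have e1 : t * (Real.log (t + c) - Real.log t) ≤ c := by
      calc t * (Real.log (t + c) - Real.log t) ≤ t * (c / t) :=
            mul_le_mul_of_nonneg_left b1 ht.le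
        _ = c := by field_simp
    have e2 : c * (Real.log (t + c) - Real.log c) ≤ t := by
      calc c * (Real.log (t + c) - Real.log c) ≤ c * (t / c) :=
            mul_le_mul_of_nonneg_left b2 h.le
        _ = t := by field_simp
    linarith

/-- The commutative form of the logarithmic submajorization `𝐒(T) ≺≺_log 4σ₂μ(T)`:
for a nonincreasing positive function `x` on `(0,1]` with integrable logarithm, the
function `S(t) = x(t)(1 + (1/t)∫₀ᵗ log(x(s)/x(t)) ds)` has integrable logarithm and
is logarithmically submajorized by `s ↦ 4·x(s/2)`. -/
theorem stmt7 (x : ℝ → ℝ) (hmono : AntitoneOn x (Set.Ioc 0 1))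
    (hpos : ∀ t ∈ Set.Ioc (0 : ℝ) 1, 0 < x t)
    (hint : IntegrableOn (fun s => Real.log (x s)) (Set.Ioc 0 1)) :
    let S : ℝ → ℝ := fun t => x t * (1 + (1 / t) * ∫ s in Set.Ioc (0 : ℝ) t, Real.log (x s / x t))
    IntegrableOn (fun s => Real.log (S s)) (Set.Ioc 0 1) ∧
      ∀ t ∈ Set.Ioc (0 : ℝ) 1,
        (∫ s in Set.Ioc (0 : ℝ) t, Real.log (S s)) ≤
          ∫ s in Set.Ioc (0 : ℝ) t, Real.log (4 * x (s / 2)) := by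
  intro S
  set f : ℝ → ℝ := fun s => Real.log (x s) with hf_def
  set F : ℝ → ℝ := fun r => ∫ u in Set.Ioc (0:ℝ) r, Real.log (x u) with hF_def
  have hfint : ∀ ⦃a b : ℝ⦄, 0 ≤ a → b ≤ 1 → IntegrableOn f (Set.Ioc a b) := by
    intro a b ha hb
    exact hint.mono_set (Set.Ioc_subset_Ioc ha hb)
  have hfmono : ∀ ⦃u s : ℝ⦄, u ∈ Set.Ioc (0:ℝ) 1 → s ∈ Set.Ioc (0:ℝ) 1 → u ≤ s → f s ≤ f u := by
    intro u s hu hs hus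
    exact (Real.log_le_log_iff (hpos s hs) (hpos u hu)).2 (hmono hu hs hus)
  have hconst : ∀ (a b C : ℝ), a ≤ b → ∫ _ in Set.Ioc a b, C = (b - a) * C := by
    intro a b C hab
    rw [setIntegral_const, Real.volume_real_Ioc_of_le hab, smul_eq_mul]
  have hconst_int : ∀ (a b C : ℝ), IntegrableOn (fun _ => C) (Set.Ioc a b) :=
    fun a b C => integrableOn_const measure_Ioc_lt_top.ne
  have hsplit : ∀ ⦃a b : ℝ⦄, 0 ≤ a → a ≤ b → b ≤ 1 →
      F b = F a + ∫ u in Set.Ioc a b, f u := by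
    intro a b ha hab hb
    rw [hF_def]
    simp only
    rw [← Set.Ioc_union_Ioc_eq_Ioc ha hab,
      setIntegral_union (Set.Ioc_disjoint_Ioc_of_le le_rfl) measurableSet_Ioc
        (hfint le_rfl (hab.trans hb)) (hfint ha hb)]
  have hchunk_le : ∀ ⦃a b : ℝ⦄, 0 < a → a ≤ b → b ≤ 1 →
      (∫ u in Set.Ioc a b, f u) ≤ (b - a) * f a := by
    intro a b ha hab hb
    rw [← hconst a b (f a) hab]
    refine setIntegral_mono_on (hfint ha.le hb) (hconst_int a b (f a)) measurableSet_Ioc ?_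
    intro u hu
    exact hfmono ⟨ha, hu.1.le.trans (hu.2.trans hb)⟩ ⟨ha.trans hu.1, hu.2.trans hb⟩ hu.1.le
  have hchunk_ge : ∀ ⦃a b : ℝ⦄, 0 ≤ a → a ≤ b → 0 < b → b ≤ 1 →
      (b - a) * f b ≤ ∫ u in Set.Ioc a b, f u := by
    intro a b ha hab hb0 hb
    rw [← hconst a b (f b) hab]
    refine setIntegral_mono_on (hconst_int a b (f b)) (hfint ha hb) measurableSet_Ioc ?_
    intro u hu
    exact hfmono ⟨ha.trans_lt hu.1, hu.2.trans hb⟩ ⟨hb0, hb⟩ hu.2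
  have hGamma_nonneg : ∀ ⦃s : ℝ⦄, s ∈ Set.Ioc (0:ℝ) 1 → 0 ≤ F s - s * f s := by
    intro s hs
    have := hchunk_ge le_rfl hs.1.le hs.1 hs.2
    have hFs : F s = ∫ u in Set.Ioc (0:ℝ) s, f u := rfl
    rw [← hFs] at this
    linarith
  have hGamma_mono : ∀ ⦃s m : ℝ⦄, s ∈ Set.Ioc (0:ℝ) 1 → m ∈ Set.Ioc (0:ℝ) 1 → s ≤ m →
      F s - s * f s ≤ F m - m * f m := by
    intro s m hs hm hsm
    have h1 := hsplit hs.1.le hsm hm.2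
    have h2 := hchunk_ge hs.1.le hsm hm.1 hm.2
    have h3 := hfmono hs hm hsm
    nlinarith [hs.1]
  have hSval : ∀ ⦃s : ℝ⦄, s ∈ Set.Ioc (0:ℝ) 1 → S s = x s * (1 + (F s - s * f s) / s) := by
    intro s hs
    have hinner : (∫ u in Set.Ioc (0:ℝ) s, Real.log (x u / x s)) = F s - s * f s := by
      have hcongr : EqOn (fun u => Real.log (x u / x s)) (fun u => f u - f s)
          (Set.Ioc (0:ℝ) s) := by
        intro u hu
        exact Real.log_div (ne_of_gt (hpos u ⟨hu.1, hu.2.trans hs.2⟩)) (ne_of_gt (hpos s hs))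
      rw [setIntegral_congr_fun measurableSet_Ioc hcongr,
        integral_sub (hfint le_rfl hs.2) (hconst_int 0 s (f s)), hconst 0 s (f s) hs.1.le]
      simp [hF_def]
      rfl
    show x s * (1 + (1/s) * _) = _
    rw [hinner]
    ring
  have hlogS_eq : ∀ ⦃s : ℝ⦄, s ∈ Set.Ioc (0:ℝ) 1 →
      Real.log (S s) = f s + Real.log (1 + (F s - s * f s) / s) := by
    intro s hs
    rw [hSval hs, Real.log_mul (ne_of_gt (hpos s hs))]
    have h1 : 0 ≤ (F s - s * f s) / s := div_nonneg (hGamma_nonneg hs) hs.1.le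
    positivity
  have hlogS_ge : ∀ ⦃s : ℝ⦄, s ∈ Set.Ioc (0:ℝ) 1 → f s ≤ Real.log (S s) := by
    intro s hs
    rw [hlogS_eq hs]
    have h1 : 0 ≤ (F s - s * f s) / s := div_nonneg (hGamma_nonneg hs) hs.1.le
    have := Real.log_nonneg (by linarith : (1:ℝ) ≤ 1 + (F s - s * f s) / s)
    linarith
  -- the key pointwise estimate
  have claimA : ∀ ⦃t : ℝ⦄, t ∈ Set.Ioc (0:ℝ) 1 → ∀ ⦃s : ℝ⦄, s ∈ Set.Ioc 0 t →
      Real.log (S s) ≤ f s + (Real.log (1 + (F (t/2) - (t/2) * f (t/2)) / s)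
        + max 0 (f (t/2) - f s)) := by
    intro t ht s hs
    have hm : t/2 ∈ Set.Ioc (0:ℝ) 1 := ⟨by linarith [ht.1], by linarith [ht.2]⟩
    have hs1 : s ∈ Set.Ioc (0:ℝ) 1 := ⟨hs.1, hs.2.trans ht.2⟩
    have hs0 : 0 < s := hs.1
    obtain ⟨c, hc_def⟩ : ∃ c', c' = F (t/2) - (t/2) * f (t/2) := ⟨_, rfl⟩
    rw [← hc_def]
    have hc0 : 0 ≤ c := hc_def ▸ hGamma_nonneg hm
    have hcs : 0 ≤ c / s := div_nonneg hc0 hs0.le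
    have hG0 : 0 ≤ F s - s * f s := hGamma_nonneg hs1
    rw [hlogS_eq hs1]
    rcases le_or_gt s (t/2) with hsm | hsm
    · have h1 : F s - s * f s ≤ c := hc_def ▸ hGamma_mono hs1 hm hsm
      have h2 : Real.log (1 + (F s - s * f s) / s) ≤ Real.log (1 + c / s) := by
        refine (Real.log_le_log_iff (by positivity) (by positivity)).2 ?_
        have h2' : (F s - s * f s) / s ≤ c / s := by gcongr
        linarith
      have h3 : (0:ℝ) ≤ max 0 (f (t/2) - f s) := le_max_left _ _
      linarith
    · have hq : 0 ≤ f (t/2) - f s := by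
        have := hfmono hm hs1 hsm.le
        linarith
      obtain ⟨q, hq_def⟩ : ∃ q', q' = f (t/2) - f s := ⟨_, rfl⟩
      rw [← hq_def]
      have hq' : 0 ≤ q := hq_def ▸ hq
      have hFs : F s ≤ F (t/2) + (s - t/2) * f (t/2) := by
        have h1 := hsplit hm.1.le hsm.le hs1.2
        have h2 := hchunk_le hm.1 hsm.le hs1.2
        linarith
      have hGb : F s - s * f s ≤ c + s * q := by
        rw [hc_def, hq_def]; nlinarith
      have harg : 1 + (F s - s * f s) / s ≤ (1 + c / s) * (1 + q) := by
        have hd : (F s - s * f s) / s ≤ c / s + q := by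
          rw [div_le_iff₀ hs0]
          have he : (c / s + q) * s = c + s * q := by field_simp
          rw [he]
          exact hGb
        nlinarith [mul_nonneg hcs hq', hd]
      have hpos1 : 0 < 1 + (F s - s * f s) / s := by
        have : 0 ≤ (F s - s * f s) / s := div_nonneg hG0 hs0.le
        linarith
      have step1 : Real.log (1 + (F s - s * f s) / s) ≤ Real.log ((1 + c/s) * (1 + q)) :=
        (Real.log_le_log_iff hpos1 (by nlinarith)).2 harg
      have step2 : Real.log ((1 + c/s) * (1 + q)) = Real.log (1 + c/s) + Real.log (1 + q) :=
        Real.log_mul (by positivity) (by positivity)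
      have step3 : Real.log (1 + q) ≤ q := by
        have := Real.log_le_sub_one_of_pos (show (0:ℝ) < 1 + q by linarith)
        linarith
      have step4 : max 0 q = q := max_eq_right hq'
      rw [step4]
      linarith
  have hmax_int : ∀ (m : ℝ) ⦃t : ℝ⦄, 0 < t → t ≤ 1 →
      IntegrableOn (fun s => max 0 (f m - f s)) (Set.Ioc 0 t) := by
    intro m t ht0 ht1
    have h1 : IntegrableOn (fun s => f m - f s) (Set.Ioc 0 t) :=
      (hconst_int 0 t (f m)).sub (hfint le_rfl ht1)
    have h2 := h1.pos_part
    have h3 : (fun s => max 0 (f m - f s)) = fun s => max (f m - f s) 0 := by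
      funext s; rw [max_comm]
    rw [h3]
    exact h2
  have hhalf : (1:ℝ)/2 ∈ Set.Ioc (0:ℝ) 1 := ⟨by norm_num, by norm_num⟩
  have hc1 : 0 ≤ F (1/2) - (1/2) * f (1/2) := hGamma_nonneg hhalf
  have hSint : IntegrableOn (fun s => Real.log (S s)) (Set.Ioc 0 1) := by
    have hFicc : IntegrableOn f (Set.Icc (0:ℝ) 1) := (integrableOn_Icc_iff_integrableOn_Ioc enorm_ne_top).2 hint
    have hFcont : ContinuousOn F (Set.Icc (0:ℝ) 1) :=
      intervalIntegral.continuousOn_primitive hFicc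
    have hfaesm : AEStronglyMeasurable f (volume.restrict (Set.Ioc (0:ℝ) 1)) := hint.1
    have hfaem : AEMeasurable f (volume.restrict (Set.Ioc (0:ℝ) 1)) := hfaesm.aemeasurable
    have hFaem : AEMeasurable F (volume.restrict (Set.Ioc (0:ℝ) 1)) :=
      ((hFcont.mono Set.Ioc_subset_Icc_self).aestronglyMeasurable measurableSet_Ioc).aemeasurable
    have heaem : AEMeasurable (fun s => f s + Real.log (1 + (F s - s * f s) / s))
        (volume.restrict (Set.Ioc (0:ℝ) 1)) := by
      apply hfaem.add
      apply Real.measurable_log.comp_aemeasurable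
      exact aemeasurable_const.add ((hFaem.sub (aemeasurable_id.mul hfaem)).div aemeasurable_id)
    have haesm : AEStronglyMeasurable (fun s => Real.log (S s))
        (volume.restrict (Set.Ioc (0:ℝ) 1)) := by
      rw [aestronglyMeasurable_iff_aemeasurable]
      apply heaem.congr
      rw [Filter.EventuallyEq, ae_restrict_iff' measurableSet_Ioc]
      exact Filter.Eventually.of_forall (fun s hs => (hlogS_eq hs).symm)
    refine Integrable.mono' (g := fun s => |f s| +
        (Real.log (1 + (F (1/2) - 1/2 * f (1/2)) / s) + max 0 (f (1/2) - f s)))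
      ?_ haesm ?_
    · exact hint.abs.add ((stmt7_integrableOn_log_one_add_div hc1 one_pos le_rfl).add
        (hmax_int (1/2) one_pos le_rfl))
    · rw [ae_restrict_iff' measurableSet_Ioc]
      refine Filter.Eventually.of_forall (fun s hs => ?_)
      have hub := claimA ⟨one_pos, le_rfl⟩ (t := 1) hs
      have hlb := hlogS_ge hs
      have hpos2 : 0 ≤ Real.log (1 + (F (1/2) - 1/2 * f (1/2)) / s) := by
        have h0 : 0 ≤ (F (1/2) - 1/2 * f (1/2)) / s := by
          apply div_nonneg _ hs.1.le
          linarith [hc1]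
        exact Real.log_nonneg (by linarith)
      have hmax0 : (0:ℝ) ≤ max 0 (f (1/2) - f s) := le_max_left _ _
      rw [Real.norm_eq_abs, abs_le]
      have h5 := neg_abs_le (f s)
      have h6 := le_abs_self (f s)
      constructor
      · linarith
      · linarith
  refine ⟨hSint, ?_⟩
  intro t ht
  obtain ⟨ht0, ht1⟩ := ht
  have hm : t/2 ∈ Set.Ioc (0:ℝ) 1 := ⟨by linarith, by linarith⟩
  have hc0 : 0 ≤ F (t/2) - (t/2) * f (t/2) := hGamma_nonneg hm
  have I1 : IntegrableOn f (Set.Ioc 0 t) := hfint le_rfl ht1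
  have I2 : IntegrableOn (fun s => Real.log (1 + (F (t/2) - (t/2) * f (t/2)) / s))
      (Set.Ioc 0 t) := stmt7_integrableOn_log_one_add_div hc0 ht0 ht1
  have I3 : IntegrableOn (fun s => max 0 (f (t/2) - f s)) (Set.Ioc 0 t) := hmax_int _ ht0 ht1
  have I23 : IntegrableOn (fun s => Real.log (1 + (F (t/2) - (t/2) * f (t/2)) / s)
      + max 0 (f (t/2) - f s)) (Set.Ioc 0 t) := I2.add I3
  have step1 : (∫ s in Set.Ioc (0:ℝ) t, Real.log (S s)) ≤
      ∫ s in Set.Ioc (0:ℝ) t, (f s + (Real.log (1 + (F (t/2) - (t/2) * f (t/2)) / s)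
        + max 0 (f (t/2) - f s))) :=
    setIntegral_mono_on (hSint.mono_set (Set.Ioc_subset_Ioc_right ht1)) (I1.add I23)
      measurableSet_Ioc (fun s hs => claimA ⟨ht0, ht1⟩ hs)
  have step2 : (∫ s in Set.Ioc (0:ℝ) t, (f s + (Real.log (1 + (F (t/2) - (t/2) * f (t/2)) / s)
        + max 0 (f (t/2) - f s)))) =
      F t + ((∫ s in Set.Ioc (0:ℝ) t, Real.log (1 + (F (t/2) - (t/2) * f (t/2)) / s))
        + ∫ s in Set.Ioc (0:ℝ) t, max 0 (f (t/2) - f s)) := by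
    rw [integral_add I1 I23, integral_add I2 I3]
  have step3 : (∫ s in Set.Ioc (0:ℝ) t, Real.log (1 + (F (t/2) - (t/2) * f (t/2)) / s)) ≤
      (F (t/2) - (t/2) * f (t/2)) + t := stmt7_integral_log_one_add_div_le hc0 ht0 ht1
  have step4 : (∫ s in Set.Ioc (0:ℝ) t, max 0 (f (t/2) - f s)) =
      (t - t/2) * f (t/2) - (F t - F (t/2)) := by
    have e1 : Set.Ioc (0:ℝ) t = Set.Ioc 0 (t/2) ∪ Set.Ioc (t/2) t :=
      (Set.Ioc_union_Ioc_eq_Ioc (by linarith) (by linarith)).symm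
    have i31 : IntegrableOn (fun s => max 0 (f (t/2) - f s)) (Set.Ioc 0 (t/2)) :=
      hmax_int _ (by linarith) (by linarith)
    have i32 : IntegrableOn (fun s => max 0 (f (t/2) - f s)) (Set.Ioc (t/2) t) := by
      apply I3.mono_set
      rw [e1]
      exact Set.subset_union_right
    rw [e1, setIntegral_union (Set.Ioc_disjoint_Ioc_of_le le_rfl) measurableSet_Ioc i31 i32]
    have hz : (∫ s in Set.Ioc (0:ℝ) (t/2), max 0 (f (t/2) - f s)) = 0 := by
      have hcz : EqOn (fun s => max 0 (f (t/2) - f s)) (fun _ => (0:ℝ))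
          (Set.Ioc (0:ℝ) (t/2)) := by
        intro s hsx
        have hfm : f (t/2) ≤ f s := hfmono ⟨hsx.1, by linarith [hsx.2, hm.2]⟩ hm hsx.2
        show max 0 (f (t/2) - f s) = 0
        exact max_eq_left (by linarith)
      rw [setIntegral_congr_fun measurableSet_Ioc hcz, integral_zero]
    have hw : (∫ s in Set.Ioc (t/2) t, max 0 (f (t/2) - f s)) =
        (t - t/2) * f (t/2) - (F t - F (t/2)) := by
      have heq2 : EqOn (fun s => max 0 (f (t/2) - f s)) (fun s => f (t/2) - f s)
          (Set.Ioc (t/2) t) := by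
        intro s hsx
        have hfs : f s ≤ f (t/2) := hfmono hm ⟨hm.1.trans hsx.1, hsx.2.trans ht1⟩ hsx.1.le
        show max 0 (f (t/2) - f s) = f (t/2) - f s
        exact max_eq_right (by linarith)
      rw [setIntegral_congr_fun measurableSet_Ioc heq2,
        integral_sub (hconst_int _ _ _) (hfint (by linarith) ht1),
        hconst _ _ _ (by linarith)]
      have hs2 := hsplit hm.1.le (by linarith : t/2 ≤ t) ht1
      linarith
    rw [hz, hw]
    ring
  have Ihalf : IntegrableOn (fun s => f (s/2)) (Set.Ioc 0 t) := by
    have h1 : IntervalIntegrable f volume 0 (t/2) :=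
      (intervalIntegrable_iff_integrableOn_Ioc_of_le (by linarith)).2 (hfint le_rfl hm.2)
    have h2 := h1.comp_mul_right (c := 2⁻¹)
    rw [show (0:ℝ) / 2⁻¹ = 0 by norm_num, show (t/2) / 2⁻¹ = t by ring] at h2
    rw [intervalIntegrable_iff_integrableOn_Ioc_of_le ht0.le] at h2
    have h4 : (fun s : ℝ => f (s/2)) = fun x : ℝ => f (x * 2⁻¹) := by
      funext s; rw [div_eq_mul_inv]
    rw [h4]
    exact h2
  have hhalfval : (∫ s in Set.Ioc (0:ℝ) t, f (s/2)) = 2 * F (t/2) := by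
    rw [← intervalIntegral.integral_of_le ht0.le,
      intervalIntegral.integral_comp_div (a := 0) (b := t) (c := (2:ℝ)) (f := f) two_ne_zero,
      show (0:ℝ)/2 = 0 by norm_num,
      intervalIntegral.integral_of_le (by linarith : (0:ℝ) ≤ t/2)]
    simp only [hF_def, hf_def, smul_eq_mul]
  have hRHS : (∫ s in Set.Ioc (0:ℝ) t, Real.log (4 * x (s/2))) =
      t * Real.log 4 + 2 * F (t/2) := by
    have hcong : EqOn (fun s => Real.log (4 * x (s/2))) (fun s => Real.log 4 + f (s/2))
        (Set.Ioc (0:ℝ) t) := by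
      intro s hsx
      have hx2 : 0 < x (s/2) := hpos _ ⟨by linarith [hsx.1], by linarith [hsx.2, ht1]⟩
      show Real.log (4 * x (s/2)) = _
      rw [Real.log_mul (by norm_num) (ne_of_gt hx2)]
    rw [setIntegral_congr_fun measurableSet_Ioc hcong,
      integral_add (hconst_int 0 t (Real.log 4)) Ihalf, hconst 0 t _ ht0.le, hhalfval]
    ring
  have hlog4 : (1:ℝ) ≤ Real.log 4 := by
    rw [Real.le_log_iff_exp_le (by norm_num : (0:ℝ) < 4)]
    calc Real.exp 1 ≤ 2.7182818286 := (Real.exp_one_lt_d9).le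
      _ ≤ 4 := by norm_num
  have htlog : t ≤ t * Real.log 4 := by nlinarith
  rw [hRHS]
  calc (∫ s in Set.Ioc (0:ℝ) t, Real.log (S s))
      ≤ F t + ((∫ s in Set.Ioc (0:ℝ) t, Real.log (1 + (F (t/2) - (t/2) * f (t/2)) / s))
        + ∫ s in Set.Ioc (0:ℝ) t, max 0 (f (t/2) - f s)) := by rw [← step2]; exact step1
    _ ≤ F t + (((F (t/2) - (t/2) * f (t/2)) + t)
        + ((t - t/2) * f (t/2) - (F t - F (t/2)))) := by rw [step4]; linarith
    _ = t + 2 * F (t/2) := by ring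
    _ ≤ t * Real.log 4 + 2 * F (t/2) := by linarith
end

section
/- Let H be a complex Hilbert space, let T be a bounded linear operator on H, and let r > 0. Define E(T,r) to be the set of all ξ ∈ H for which there exists a sequence (ξ_n)_{n≥1} in H with lim_{n→∞} ‖ξ_n − ξ‖ = 0 and limsup_{n→∞} ‖T^n ξ_n‖^{1/n} ≤ r. Then E(T,r) is a closed linear subspace of H, and for every bounded linear operator S on H with ST = TS one has S(E(T,r)) ⊆ E(T,r). -/
open Filter
open scoped ENNReal NNReal

/-- The Haagerup–Schultz growth subspace `E(T,r)`. -/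
def growthSubspace {H : Type*} [NormedAddCommGroup H] [InnerProductSpace ℂ H]
    (T : H →L[ℂ] H) (r : ℝ) : Set H :=
  {ξ : H | ∃ u : ℕ → H,
    Tendsto (fun n => ‖u n - ξ‖) atTop (nhds 0) ∧
    Filter.limsup (fun n => (‖(T ^ n) (u n)‖₊ : ℝ≥0∞) ^ (1 / (n : ℝ))) atTop ≤
      ENNReal.ofReal r}

/-- Eventually `C * s₁ ^ n ≤ s ^ n` when `0 ≤ s₁ < s`. -/
lemma ev_pow_le (C s₁ s : ℝ) (h1 : 0 ≤ s₁) (h2 : s₁ < s) :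
    ∀ᶠ n in atTop, C * s₁ ^ n ≤ s ^ n := by
  have hs : 0 < s := lt_of_le_of_lt h1 h2
  have hlt : s₁ / s < 1 := (div_lt_one hs).2 h2
  have hge : 0 ≤ s₁ / s := div_nonneg h1 hs.le
  have h0 : Tendsto (fun n : ℕ => C * (s₁ / s) ^ n) atTop (nhds (C * 0)) :=
    (tendsto_pow_atTop_nhds_zero_of_lt_one hge hlt).const_mul C
  rw [mul_zero] at h0
  filter_upwards [h0.eventually_le_const (by norm_num : (0:ℝ) < 1)] with n hn
  have key : (s₁ / s) ^ n * s ^ n = s₁ ^ n := by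
    rw [div_pow]; field_simp
  calc C * s₁ ^ n = (C * (s₁ / s) ^ n) * s ^ n := by rw [mul_assoc, key]
    _ ≤ 1 * s ^ n := mul_le_mul_of_nonneg_right hn (pow_pos hs n).le
    _ = s ^ n := one_mul _

/-- Characterization of the limsup condition. -/
lemma limsup_char {H : Type*} [NormedAddCommGroup H] [InnerProductSpace ℂ H]
    (T : H →L[ℂ] H) {r : ℝ} (hr : 0 < r) (v : ℕ → H) :
    Filter.limsup (fun n => (‖(T ^ n) (v n)‖₊ : ℝ≥0∞) ^ (1 / (n : ℝ))) atTop ≤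
      ENNReal.ofReal r ↔
    ∀ s, r < s → ∀ᶠ n in atTop, ‖(T ^ n) (v n)‖ ≤ s ^ n := by
  constructor
  · intro h s hs
    have hs0 : 0 < s := hr.trans hs
    have hlt : ENNReal.ofReal r < ENNReal.ofReal s := (ENNReal.ofReal_lt_ofReal_iff hs0).2 hs
    have hev := eventually_lt_of_limsup_lt (lt_of_le_of_lt h hlt)
    filter_upwards [hev, eventually_ge_atTop 1] with n hn hn1
    have hn0 : (n : ℝ) ≠ 0 := Nat.cast_ne_zero.2 (by omega)
    have h1 : ((‖(T ^ n) (v n)‖₊ : ℝ≥0∞) ^ (1 / (n : ℝ))) ^ (n : ℝ) ≤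
        (ENNReal.ofReal s) ^ (n : ℝ) := ENNReal.rpow_le_rpow hn.le (Nat.cast_nonneg n)
    rw [← ENNReal.rpow_mul, one_div, inv_mul_cancel₀ hn0, ENNReal.rpow_one,
      ENNReal.rpow_natCast, ← ENNReal.ofReal_pow hs0.le,
      ← ENNReal.ofReal_coe_nnreal, coe_nnnorm] at h1
    exact (ENNReal.ofReal_le_ofReal_iff (pow_nonneg hs0.le n)).1 h1
  · intro h
    refine ENNReal.le_of_forall_pos_le_add fun ε hε _ => ?_
    have hs : r < r + (ε : ℝ) := lt_add_of_pos_right r hε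
    have hle : ENNReal.ofReal (r + (ε : ℝ)) ≤ ENNReal.ofReal r + ε := by
      rw [ENNReal.ofReal_add hr.le ε.coe_nonneg, ENNReal.ofReal_coe_nnreal]
    refine le_trans (limsup_le_of_le (by isBoundedDefault) ?_) hle
    filter_upwards [h (r + ε) hs, eventually_ge_atTop 1] with n hn hn1
    have hn0 : (n : ℝ) ≠ 0 := Nat.cast_ne_zero.2 (by omega)
    have hs0 : (0 : ℝ) ≤ r + ε := by positivity
    have h1 : (‖(T ^ n) (v n)‖₊ : ℝ≥0∞) ≤ ENNReal.ofReal ((r + ε) ^ n) := by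
      rw [← ENNReal.ofReal_coe_nnreal, coe_nnnorm]
      exact ENNReal.ofReal_le_ofReal hn
    calc (‖(T ^ n) (v n)‖₊ : ℝ≥0∞) ^ (1 / (n : ℝ))
        ≤ (ENNReal.ofReal ((r + ε) ^ n)) ^ (1 / (n : ℝ)) :=
          ENNReal.rpow_le_rpow h1 (by positivity)
      _ = ENNReal.ofReal (r + ε) := by
          rw [ENNReal.ofReal_pow hs0, ← ENNReal.rpow_natCast (ENNReal.ofReal (r + ↑ε)) n,
            ← ENNReal.rpow_mul, mul_one_div, div_self hn0, ENNReal.rpow_one]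

/-- Membership characterization of the growth subspace. -/
lemma mem_growth_char {H : Type*} [NormedAddCommGroup H] [InnerProductSpace ℂ H]
    (T : H →L[ℂ] H) {r : ℝ} (hr : 0 < r) (ξ : H) :
    ξ ∈ growthSubspace T r ↔
    ∀ s, r < s → ∀ δ : ℝ, 0 < δ →
      ∀ᶠ N in atTop, ∃ x : H, ‖x - ξ‖ ≤ δ ∧ ‖(T ^ N) x‖ ≤ s ^ N := by
  constructor
  · rintro ⟨u, hu, hl⟩ s hs δ hδ
    have h1 := (limsup_char T hr u).1 hl s hs
    have h2 : ∀ᶠ n in atTop, ‖u n - ξ‖ ≤ δ := hu.eventually_le_const hδ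
    filter_upwards [h1, h2] with n hn1 hn2
    exact ⟨u n, hn2, hn1⟩
  · intro hP
    -- countable family of conditions
    set Q : ℕ → ℕ → Prop := fun k N =>
      ∃ x : H, ‖x - ξ‖ ≤ 1 / (k + 1 : ℝ) ∧ ‖(T ^ N) x‖ ≤ (r + 1 / (k + 1 : ℝ)) ^ N with hQdef
    have hQ : ∀ k, ∃ m, ∀ N ≥ m, Q k N := by
      intro k
      have hk : (0 : ℝ) < 1 / (k + 1 : ℝ) := by positivity
      exact eventually_atTop.1 (hP (r + 1 / (k + 1 : ℝ)) (lt_add_of_pos_right r hk) _ hk)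
    choose M0 hM0 using hQ
    -- strictly increasing modulus
    set M : ℕ → ℕ := fun k => Nat.rec (M0 0) (fun k ih => max (M0 (k + 1)) (ih + 1)) k with hMdef
    have hM0le : ∀ k, M0 k ≤ M k := by
      intro k; cases k with
      | zero => exact le_rfl
      | succ k => exact le_max_left _ _
    have hMmono : StrictMono M := strictMono_nat_of_lt_succ fun k =>
      lt_of_lt_of_le (Nat.lt_succ_self _) (le_max_right _ _)
    have hMself : ∀ k, k ≤ M k := fun k => hMmono.le_apply
    have hQ' : ∀ k N, M k ≤ N → Q k N := fun k N h => hM0 k N (le_trans (hM0le k) h)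
    -- greatest index usable at time n
    set K : ℕ → ℕ := fun n => Nat.findGreatest (fun k => M k ≤ n) n with hKdef
    have key1 : ∀ k n, M k ≤ n → k ≤ K n := fun k n h =>
      Nat.le_findGreatest (le_trans (hMself k) h) h
    have key2 : ∀ n, M 0 ≤ n → M (K n) ≤ n := fun n h =>
      Nat.findGreatest_spec (P := fun k => M k ≤ n) (m := 0) (Nat.zero_le n) h
    -- the diagonal sequence
    have hu : ∀ n, ∃ x : H, (M 0 ≤ n →
        ‖x - ξ‖ ≤ 1 / (K n + 1 : ℝ) ∧ ‖(T ^ n) x‖ ≤ (r + 1 / (K n + 1 : ℝ)) ^ n) := by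
      intro n
      by_cases h : M 0 ≤ n
      · obtain ⟨x, hx1, hx2⟩ := hQ' (K n) n (key2 n h)
        exact ⟨x, fun _ => ⟨hx1, hx2⟩⟩
      · exact ⟨ξ, fun h' => absurd h' h⟩
    choose u hu using hu
    have hKtop : Tendsto K atTop atTop := by
      rw [tendsto_atTop]
      intro k
      filter_upwards [eventually_ge_atTop (M k)] with n hn
      exact key1 k n hn
    have hinv : Tendsto (fun n => 1 / ((K n : ℝ) + 1)) atTop (nhds 0) :=
      tendsto_one_div_add_atTop_nhds_zero_nat.comp hKtop
    refine ⟨u, ?_, ?_⟩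
    · refine squeeze_zero' ?_ ?_ hinv
      · exact Eventually.of_forall fun n => norm_nonneg _
      · filter_upwards [eventually_ge_atTop (M 0)] with n hn
        exact (hu n hn).1
    · rw [limsup_char T hr u]
      intro s hs
      obtain ⟨k, hk⟩ := exists_nat_one_div_lt (sub_pos.2 hs)
      filter_upwards [eventually_ge_atTop (M k)] with n hn
      have h0 : M 0 ≤ n := le_trans (hMmono.monotone (Nat.zero_le k)) hn
      have hkK : k ≤ K n := key1 k n hn
      have hbase : r + 1 / ((K n : ℝ) + 1) ≤ s := by
        have h1 : 1 / ((K n : ℝ) + 1) ≤ 1 / ((k : ℝ) + 1) := by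
          apply one_div_le_one_div_of_le (by positivity)
          exact_mod_cast Nat.add_le_add_right hkK 1
        linarith
      have hbase0 : (0 : ℝ) ≤ r + 1 / ((K n : ℝ) + 1) := by positivity
      exact le_trans (hu n h0).2 (pow_le_pow_left₀ hbase0 hbase n)

/-- `E(T,r)` is a closed linear subspace, invariant under every bounded operator
commuting with `T` (i.e. `T`-hyperinvariant). -/
theorem stmt8 {H : Type*} [NormedAddCommGroup H] [InnerProductSpace ℂ H] [CompleteSpace H]
    (T : H →L[ℂ] H) (r : ℝ) (hr : 0 < r) :
    IsClosed (growthSubspace T r) ∧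
    (0 : H) ∈ growthSubspace T r ∧
    (∀ ξ η : H, ξ ∈ growthSubspace T r → η ∈ growthSubspace T r →
      ξ + η ∈ growthSubspace T r) ∧
    (∀ (c : ℂ) (ξ : H), ξ ∈ growthSubspace T r → c • ξ ∈ growthSubspace T r) ∧
    (∀ S : H →L[ℂ] H, S * T = T * S →
      ∀ ξ ∈ growthSubspace T r, S ξ ∈ growthSubspace T r) := by
  refine ⟨?_, ?_, ?_, ?_, ?_⟩
  · -- closedness
    rw [← isSeqClosed_iff_isClosed]
    intro v ξ hv hvξ
    rw [mem_growth_char T hr]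
    intro s hs δ hδ
    have : ∀ᶠ j in atTop, ‖v j - ξ‖ ≤ δ / 2 := by
      have : Tendsto (fun j => ‖v j - ξ‖) atTop (nhds 0) :=
        (tendsto_iff_norm_sub_tendsto_zero.1 hvξ)
      exact this.eventually_le_const (by linarith)
    obtain ⟨j, hj⟩ := this.exists
    have hvj := (mem_growth_char T hr (v j)).1 (hv j) s hs (δ / 2) (by linarith)
    filter_upwards [hvj] with N hN
    obtain ⟨x, hx1, hx2⟩ := hN
    refine ⟨x, ?_, hx2⟩
    calc ‖x - ξ‖ = ‖(x - v j) + (v j - ξ)‖ := by abel_nf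
      _ ≤ ‖x - v j‖ + ‖v j - ξ‖ := norm_add_le _ _
      _ ≤ δ / 2 + δ / 2 := add_le_add hx1 hj
      _ = δ := by ring
  · -- zero
    rw [mem_growth_char T hr]
    intro s hs δ hδ
    refine Eventually.of_forall fun N => ⟨0, by simpa using hδ.le, ?_⟩
    rw [map_zero, norm_zero]
    exact (pow_pos (hr.trans hs) N).le
  · -- addition
    intro ξ η hξ hη
    rw [mem_growth_char T hr] at hξ hη ⊢
    intro s hs δ hδ
    set s₁ := (r + s) / 2 with hs₁def
    have hrs₁ : r < s₁ := by rw [hs₁def]; linarith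
    have hs₁s : s₁ < s := by rw [hs₁def]; linarith
    have hs₁0 : 0 ≤ s₁ := by rw [hs₁def]; linarith
    filter_upwards [hξ s₁ hrs₁ (δ / 2) (by linarith), hη s₁ hrs₁ (δ / 2) (by linarith),
      ev_pow_le 2 s₁ s hs₁0 hs₁s] with N hN1 hN2 hN3
    obtain ⟨x, hx1, hx2⟩ := hN1
    obtain ⟨y, hy1, hy2⟩ := hN2
    refine ⟨x + y, ?_, ?_⟩
    · calc ‖x + y - (ξ + η)‖ = ‖(x - ξ) + (y - η)‖ := by abel_nf
        _ ≤ ‖x - ξ‖ + ‖y - η‖ := norm_add_le _ _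
        _ ≤ δ / 2 + δ / 2 := add_le_add hx1 hy1
        _ = δ := by ring
    · calc ‖(T ^ N) (x + y)‖ = ‖(T ^ N) x + (T ^ N) y‖ := by rw [map_add]
        _ ≤ ‖(T ^ N) x‖ + ‖(T ^ N) y‖ := norm_add_le _ _
        _ ≤ s₁ ^ N + s₁ ^ N := add_le_add hx2 hy2
        _ = 2 * s₁ ^ N := by ring
        _ ≤ s ^ N := hN3
  · -- scalar multiplication
    intro c ξ hξ
    rw [mem_growth_char T hr] at hξ ⊢
    intro s hs δ hδ
    set s₁ := (r + s) / 2 with hs₁def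
    have hrs₁ : r < s₁ := by rw [hs₁def]; linarith
    have hs₁s : s₁ < s := by rw [hs₁def]; linarith
    have hs₁0 : 0 ≤ s₁ := by rw [hs₁def]; linarith
    have hδ' : 0 < δ / (‖c‖ + 1) := by positivity
    filter_upwards [hξ s₁ hrs₁ (δ / (‖c‖ + 1)) hδ', ev_pow_le ‖c‖ s₁ s hs₁0 hs₁s]
      with N hN1 hN3
    obtain ⟨x, hx1, hx2⟩ := hN1
    refine ⟨c • x, ?_, ?_⟩
    · have : c • x - c • ξ = c • (x - ξ) := by rw [smul_sub]
      rw [this, norm_smul]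
      calc ‖c‖ * ‖x - ξ‖ ≤ (‖c‖ + 1) * (δ / (‖c‖ + 1)) := by
            apply mul_le_mul (by linarith) hx1 (norm_nonneg _) (by positivity)
        _ = δ := by field_simp
    · rw [map_smul, norm_smul]
      calc ‖c‖ * ‖(T ^ N) x‖ ≤ ‖c‖ * s₁ ^ N :=
            mul_le_mul_of_nonneg_left hx2 (norm_nonneg _)
        _ ≤ s ^ N := hN3
  · -- hyperinvariance
    intro S hST ξ hξ
    have hcomm : ∀ n : ℕ, ∀ x : H, (T ^ n) (S x) = S ((T ^ n) x) := by
      intro n x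
      have h : Commute S T := hST
      have h2 : T ^ n * S = S * T ^ n := ((h.pow_right n)).symm
      calc (T ^ n) (S x) = (T ^ n * S) x := rfl
        _ = (S * T ^ n) x := by rw [h2]
        _ = S ((T ^ n) x) := rfl
    rw [mem_growth_char T hr] at hξ ⊢
    intro s hs δ hδ
    set s₁ := (r + s) / 2 with hs₁def
    have hrs₁ : r < s₁ := by rw [hs₁def]; linarith
    have hs₁s : s₁ < s := by rw [hs₁def]; linarith
    have hs₁0 : 0 ≤ s₁ := by rw [hs₁def]; linarith
    have hδ' : 0 < δ / (‖S‖ + 1) := by positivity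
    filter_upwards [hξ s₁ hrs₁ (δ / (‖S‖ + 1)) hδ', ev_pow_le ‖S‖ s₁ s hs₁0 hs₁s]
      with N hN1 hN3
    obtain ⟨x, hx1, hx2⟩ := hN1
    refine ⟨S x, ?_, ?_⟩
    · calc ‖S x - S ξ‖ = ‖S (x - ξ)‖ := by rw [map_sub]
        _ ≤ ‖S‖ * ‖x - ξ‖ := S.le_opNorm _
        _ ≤ (‖S‖ + 1) * (δ / (‖S‖ + 1)) := by
            apply mul_le_mul (by linarith) hx1 (norm_nonneg _) (by positivity)
        _ = δ := by field_simp
    · calc ‖(T ^ N) (S x)‖ = ‖S ((T ^ N) x)‖ := by rw [hcomm]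
        _ ≤ ‖S‖ * ‖(T ^ N) x‖ := S.le_opNorm _
        _ ≤ ‖S‖ * s₁ ^ N := mul_le_mul_of_nonneg_left hx2 (norm_nonneg _)
        _ ≤ s ^ N := hN3
end

section
/- Let A be a complex unital Banach algebra, let T ∈ A be such that z·1 − T is invertible for every z ∈ ℂ with |z| = 1, let a ∈ ℂ with |a| < 1, let θ ∈ ℝ, and suppose 1 − conj(a)·T is invertible. Set γ(T) = e^{iθ}·(T − a·1)·(1 − conj(a)·T)^{-1}. Then z·1 − γ(T) is invertible for every z with |z| = 1, and ∮_{|z|=1} (z·1 − γ(T))^{-1} dz = ∮_{|w|=1} (w·1 − T)^{-1} dw. -/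
open Complex Set intervalIntegral

section auxs
lemma hs_inverse_eq {A : Type*} [MonoidWithZero A] {x y : A} (h1 : x * y = 1) (h2 : y * x = 1) :
    Ring.inverse x = y :=
  Ring.inverse_unit ⟨x, y, h1, h2⟩

variable {A : Type*} [NormedRing A] [NormedAlgebra ℂ A]

lemma hs_fact (T : A) (a b E : ℂ) (hU : IsUnit ((1:A) - b • T)) (w : ℂ) (hw : 1 - b*w ≠ 0) :
    (E*(w-a)/(1-b*w)) • (1:A) - E • ((T - a•(1:A)) * Ring.inverse ((1:A) - b•T))
      = (E*(1-b*a)/(1-b*w)) • ((w•(1:A) - T) * Ring.inverse ((1:A) - b•T)) := by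
  have hQS : Ring.inverse ((1:A) - b•T) * ((1:A) - b•T) = 1 := Ring.inverse_mul_cancel _ hU
  have hSQ : ((1:A) - b•T) * Ring.inverse ((1:A) - b•T) = 1 := Ring.mul_inverse_cancel _ hU
  have cancel : ∀ X Y : A, X * ((1:A) - b•T) = Y * ((1:A) - b•T) → X = Y := by
    intro X Y h
    have h2 := congrArg (· * Ring.inverse ((1:A) - b•T)) h
    simpa only [mul_assoc, hSQ, mul_one] using h2
  apply cancel
  rw [sub_mul, smul_mul_assoc, smul_mul_assoc, smul_mul_assoc, one_mul,
    mul_assoc, hQS, mul_one, mul_assoc, hQS, mul_one]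
  have hk : (1-b*w)*(1-b*w)⁻¹ = 1 := mul_inv_cancel₀ hw
  match_scalars
  · linear_combination (-E*a) * hk
  · linear_combination E * hk

lemma hs_fact2 (T : A) (a b E : ℂ) (hE : E ≠ 0) (hba : 1 - b*a ≠ 0)
    (hU : IsUnit ((1:A) - b • T)) (w : ℂ) (hw : 1 - b*w ≠ 0) (hW : IsUnit (w•(1:A) - T)) :
    IsUnit ((E*(w-a)/(1-b*w)) • (1:A) - E • ((T - a•(1:A)) * Ring.inverse ((1:A) - b•T)))
    ∧ Ring.inverse ((E*(w-a)/(1-b*w)) • (1:A) - E • ((T - a•(1:A)) * Ring.inverse ((1:A) - b•T)))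
      = (E*(1-b*a)/(1-b*w))⁻¹ • (((1:A) - b•T) * Ring.inverse (w•(1:A) - T)) := by
  rw [hs_fact T a b E hU w hw]
  have hc : E*(1-b*a)/(1-b*w) ≠ 0 := div_ne_zero (mul_ne_zero hE hba) hw
  have h1 : ((E*(1-b*a)/(1-b*w)) • ((w•(1:A) - T) * Ring.inverse ((1:A) - b•T))) *
      ((E*(1-b*a)/(1-b*w))⁻¹ • (((1:A) - b•T) * Ring.inverse (w•(1:A) - T))) = 1 := by
    rw [smul_mul_smul_comm, mul_inv_cancel₀ hc, one_smul, mul_assoc,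
      ← mul_assoc (Ring.inverse ((1:A) - b•T)), Ring.inverse_mul_cancel _ hU, one_mul,
      Ring.mul_inverse_cancel _ hW]
  have h2 : ((E*(1-b*a)/(1-b*w))⁻¹ • (((1:A) - b•T) * Ring.inverse (w•(1:A) - T))) *
      ((E*(1-b*a)/(1-b*w)) • ((w•(1:A) - T) * Ring.inverse ((1:A) - b•T))) = 1 := by
    rw [smul_mul_smul_comm, inv_mul_cancel₀ hc, one_smul, mul_assoc,
      ← mul_assoc (Ring.inverse (w•(1:A) - T)), Ring.inverse_mul_cancel _ hW, one_mul,
      Ring.mul_inverse_cancel _ hU]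
  exact ⟨⟨⟨_, _, h1, h2⟩, rfl⟩, hs_inverse_eq h1 h2⟩

lemma hs_ba (a : ℂ) (ha : ‖a‖ < 1) : 1 - (starRingEnd ℂ) a * a ≠ 0 := by
  rw [sub_ne_zero, mul_comm, Complex.mul_conj, Complex.normSq_eq_norm_sq]
  intro h
  have h2 : (1:ℝ) = (‖a‖)^2 := by exact_mod_cast h
  nlinarith [norm_nonneg a]

lemma hs_surj (a : ℂ) (ha : ‖a‖ < 1) (θ : ℝ) (z : ℂ) (hz : ‖z‖ = 1) :
    ∃ w : ℂ, ‖w‖ = 1 ∧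
      Complex.exp (↑θ*I) * (w - a) / (1 - (starRingEnd ℂ) a * w) = z := by
  set E := Complex.exp (↑θ*I) with hEdef
  have hEa : ‖E‖ = 1 := Complex.norm_exp_ofReal_mul_I θ
  have hE0 : E ≠ 0 := Complex.exp_ne_zero _
  have hz0 : z ≠ 0 := by
    intro h; rw [h] at hz; simp at hz
  have hden : E + (starRingEnd ℂ) a * z ≠ 0 := by
    intro h
    have h2 : E = -((starRingEnd ℂ) a * z) := by linear_combination h
    have := congrArg Norm.norm h2
    rw [hEa, norm_neg, norm_mul, Complex.norm_conj, hz, mul_one] at this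
    exact absurd this.symm (ne_of_lt ha)
  have hEE : E * (starRingEnd ℂ) E = 1 := by
    rw [Complex.mul_conj, Complex.normSq_eq_norm_sq, hEa]; norm_num
  have hzz : z * (starRingEnd ℂ) z = 1 := by
    rw [Complex.mul_conj, Complex.normSq_eq_norm_sq, hz]; norm_num
  have hba := hs_ba a ha
  refine ⟨(z + a*E)/(E + (starRingEnd ℂ) a * z), ?_, ?_⟩
  · have hnum : z + a*E = E * (starRingEnd ℂ) (E + (starRingEnd ℂ) a * z) * z := by
      simp only [map_add, map_mul, Complex.conj_conj]
      linear_combination (-z) * hEE + (-(a*E))*hzz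
    rw [norm_div, hnum, norm_mul, norm_mul, hEa, one_mul, Complex.norm_conj, hz, mul_one,
      div_self (norm_ne_zero_iff.mpr hden)]
  · have h1 : 1 - (starRingEnd ℂ) a * ((z + a*E)/(E + (starRingEnd ℂ) a * z))
        = E*(1 - (starRingEnd ℂ) a * a)/(E + (starRingEnd ℂ) a * z) := by
      field_simp; ring
    have h2 : (z + a*E)/(E + (starRingEnd ℂ) a * z) - a
        = z*(1 - (starRingEnd ℂ) a * a)/(E + (starRingEnd ℂ) a * z) := by
      rw [eq_div_iff hden, sub_mul, div_mul_cancel₀ _ hden]; ring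
    rw [h1, h2]
    rw [div_eq_iff (div_ne_zero (mul_ne_zero hE0 hba) hden)]
    ring
end auxs

set_option maxHeartbeats 1000000 in
/-- Invariance of the Haagerup–Schultz contour-integral idempotent under the Möbius
transformation `γ(z) = e^{iθ}(z − a)/(1 − ā z)` of the unit disk:
`∮_{|z|=1} (z − γ(T))⁻¹ dz = ∮_{|w|=1} (w − T)⁻¹ dw`. -/
theorem stmt13 {A : Type*} [NormedRing A] [NormedAlgebra ℂ A] [CompleteSpace A]
    (T : A) (hT : ∀ z : ℂ, ‖z‖ = 1 → IsUnit (z • (1 : A) - T))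
    (a : ℂ) (ha : ‖a‖ < 1) (θ : ℝ)
    (hU : IsUnit ((1 : A) - (starRingEnd ℂ) a • T)) :
    let γT : A := Complex.exp (θ * Complex.I) •
      ((T - a • (1 : A)) * Ring.inverse ((1 : A) - (starRingEnd ℂ) a • T))
    (∀ z : ℂ, ‖z‖ = 1 → IsUnit (z • (1 : A) - γT)) ∧
    (∮ z in C(0, 1), Ring.inverse (z • (1 : A) - γT)) =
      ∮ w in C(0, 1), Ring.inverse (w • (1 : A) - T) := by
  intro γT
  set ca := (starRingEnd ℂ) a with hca
  set E := Complex.exp (↑θ * Complex.I) with hE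
  have hE0 : E ≠ 0 := Complex.exp_ne_zero _
  have hba : 1 - ca * a ≠ 0 := hs_ba a ha
  have habs1 : ∀ s : ℝ, ‖circleMap 0 1 s‖ = 1 := fun s => by
    simpa using norm_circleMap_zero 1 s
  -- the key algebraic facts
  have hcaw : ∀ w : ℂ, ‖w‖ = 1 → 1 - ca * w ≠ 0 := by
    intro w hw1 h
    have h2 : (1:ℂ) = ca * w := by linear_combination h
    have := congrArg Norm.norm h2
    rw [norm_one, norm_mul, hca, Complex.norm_conj, hw1, mul_one] at this
    exact absurd this.symm (ne_of_lt ha)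
  have part1core : ∀ w : ℂ, ‖w‖ = 1 →
      IsUnit ((E*(w-a)/(1-ca*w)) • (1:A) - γT) ∧
      Ring.inverse ((E*(w-a)/(1-ca*w)) • (1:A) - γT)
        = (E*(1-ca*a)/(1-ca*w))⁻¹ • (((1:A) - ca•T) * Ring.inverse (w•(1:A) - T)) := by
    intro w hw1
    exact hs_fact2 T a ca E hE0 hba hU w (hcaw w hw1) (hT w hw1)
  have part1 : ∀ z : ℂ, ‖z‖ = 1 → IsUnit (z • (1:A) - γT) := by
    intro z hz
    obtain ⟨w, hw1, hwz⟩ := hs_surj a ha θ z hz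
    rw [← hwz]
    exact (part1core w hw1).1
  refine ⟨part1, ?_⟩
  -- setup of the reparametrization
  set u : ℝ → ℂ := fun s => 1 - ca * circleMap 0 1 s with hu
  have hure : ∀ s, 0 < (u s).re := by
    intro s
    have h1 : (ca * circleMap 0 1 s).re ≤ ‖a‖ := by
      calc (ca * circleMap 0 1 s).re ≤ ‖ca * circleMap 0 1 s‖ := Complex.re_le_norm _
        _ = ‖a‖ := by rw [norm_mul, hca, Complex.norm_conj, habs1, mul_one]
    have h2 : (u s).re = 1 - (ca * circleMap 0 1 s).re := by simp [hu]
    rw [h2]; linarith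
  have huslit : ∀ s, u s ∈ Complex.slitPlane := fun s => Or.inl (hure s)
  have hu0 : ∀ s, u s ≠ 0 := by
    intro s h; have := hure s; rw [h] at this; simp at this
  have hcontu : Continuous u := continuous_const.sub (continuous_const.mul (continuous_circleMap 0 1))
  set d : ℝ → ℂ := fun s => -(ca * (circleMap 0 1 s * I)) / u s with hd
  set φ : ℝ → ℝ := fun s => θ + s - 2 * (Complex.log (u s)).im with hphi
  set φ' : ℝ → ℝ := fun s => 1 - 2 * (d s).im with hphi'
  have hL : ∀ s, HasDerivAt (fun t => Complex.log (u t)) (d s) s := by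
    intro s
    have hu' : HasDerivAt u (-(ca * (circleMap 0 1 s * I))) s := by
      simpa using ((hasDerivAt_circleMap 0 1 s).const_mul ca).const_sub 1
    exact hu'.clog_real (huslit s)
  have hphidiff : ∀ s, HasDerivAt φ (φ' s) s := by
    intro s
    have him : HasDerivAt (fun t => (Complex.log (u t)).im) ((d s).im) s :=
      Complex.imCLM.hasFDerivAt.comp_hasDerivAt s (hL s)
    have h2 := ((hasDerivAt_id s).const_add (θ:ℝ)).sub (him.const_mul 2)
    exact h2
  have hcontφ' : Continuous φ' := by
    have hcontd : Continuous d := by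
      rw [hd]
      exact (continuous_const.mul ((continuous_circleMap 0 1).mul continuous_const)).neg.div hcontu hu0
    rw [hphi']
    exact continuous_const.sub (continuous_const.mul (Complex.continuous_im.comp hcontd))
  have hcirc : ∀ s : ℝ, circleMap 0 1 s * (starRingEnd ℂ) (circleMap 0 1 s) = 1 := fun s => by
    rw [Complex.mul_conj, Complex.normSq_eq_norm_sq, habs1]; norm_num
  have hw0 : ∀ s : ℝ, circleMap 0 1 s ≠ 0 := by
    intro s h; have := habs1 s; rw [h] at this; simp at this
  have hcw : ∀ s : ℝ, (starRingEnd ℂ) (circleMap 0 1 s) = (circleMap 0 1 s)⁻¹ := fun s =>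
    eq_inv_of_mul_eq_one_left (by rw [mul_comm]; exact hcirc s)
  have hwa : ∀ s : ℝ, circleMap 0 1 s - a ≠ 0 := by
    intro s h
    have h2 : circleMap 0 1 s = a := sub_eq_zero.mp h
    rw [← h2, habs1 s] at ha
    exact lt_irrefl _ ha
  -- key scalar identity for the derivative
  have hkey : ∀ s : ℝ, (φ' s : ℂ)
      = circleMap 0 1 s * (1 - ca*a) / (u s * (circleMap 0 1 s - a)) := by
    intro s
    have hds : d s = (-(ca * circleMap 0 1 s)/u s) * I := by
      simp only [hd]; ring
    have him2 : (d s).im = ((-(ca * circleMap 0 1 s)/u s)).re := by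
      rw [hds, Complex.mul_I_im]
    have hre2 : (((-(ca * circleMap 0 1 s)/u s)).re : ℂ) * 2
        = (-(ca * circleMap 0 1 s)/u s) + (starRingEnd ℂ) (-(ca * circleMap 0 1 s)/u s) := by
      rw [Complex.add_conj]; push_cast; ring
    have hconj : (starRingEnd ℂ) (-(ca * circleMap 0 1 s)/u s)
        = -(a * (circleMap 0 1 s)⁻¹)/(1 - a * (circleMap 0 1 s)⁻¹) := by
      simp only [hu, map_div₀, map_neg, map_mul, map_sub, map_one, hcw s, hca, Complex.conj_conj]
    have hcu : 1 - a * (circleMap 0 1 s)⁻¹ ≠ 0 := by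
      intro h
      apply hu0 s
      have h2 := congrArg (starRingEnd ℂ) h
      simp only [map_sub, map_one, map_mul, map_inv₀, hcw s, inv_inv, map_zero] at h2
      simp only [hu]
      rw [hca]
      exact h2
    have hmain : (φ' s : ℂ) = 1 - ((-(ca * circleMap 0 1 s)/u s)
        + (-(a * (circleMap 0 1 s)⁻¹)/(1 - a * (circleMap 0 1 s)⁻¹))) := by
      simp only [hphi']
      push_cast
      rw [him2]
      linear_combination (-1 : ℂ)*hre2 + (-1 : ℂ)*hconj
    rw [hmain]
    simp only [hu] at hcu ⊢
    field_simp [hw0 s, hcaw _ (habs1 s), hwa s, hcu]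
    ring
  -- the reparametrized circle point
  have hcm : ∀ t : ℝ, circleMap 0 1 t = Complex.exp (↑t*I) := fun t => by simp [circleMap]
  have hexpφ : ∀ s : ℝ, circleMap 0 1 (φ s) = E * (circleMap 0 1 s - a)/u s := by
    intro s
    have hlog : Complex.exp ((starRingEnd ℂ) (Complex.log (u s)) - Complex.log (u s))
        = (starRingEnd ℂ) (u s) / u s := by
      rw [Complex.exp_sub, Complex.exp_conj, Complex.exp_log (hu0 s)]
    have hsc := Complex.sub_conj (Complex.log (u s))
    push_cast at hsc
    have hφval : (↑(φ s) : ℂ) * I = ↑θ*I + (↑s*I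
        + ((starRingEnd ℂ) (Complex.log (u s)) - Complex.log (u s))) := by
      simp only [hphi]
      push_cast
      linear_combination hsc
    have hwc : Complex.exp (↑s*I) * (starRingEnd ℂ) (u s) = Complex.exp (↑s*I) - a := by
      have h1 := hcirc s
      rw [hcm s] at h1
      simp only [hu, map_sub, map_one, map_mul, hca, Complex.conj_conj, hcm s]
      linear_combination (-a)*h1
    rw [hcm (φ s), hφval, Complex.exp_add, Complex.exp_add, hlog, hE, hcm s]
    rw [← hwc]
    field_simp
  -- the scalar ℝ→ℂ smul conversion
  have hrsmul : ∀ (r : ℝ) (x : A), r • x = (r : ℂ) • x := by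
    intro r x
    have h2 := smul_one_smul ℂ r x
    rw [Complex.real_smul, mul_one] at h2
    exact h2.symm
  -- pointwise identity of the integrands
  have hpoint : ∀ s : ℝ, φ' s • ((circleMap 0 1 (φ s) * I) •
        Ring.inverse ((circleMap 0 1 (φ s)) • (1:A) - γT))
      = (circleMap 0 1 s * I) • Ring.inverse ((circleMap 0 1 s) • (1:A) - T)
        + (circleMap 0 1 s * I * (ca / u s)) • (1:A) := by
    intro s
    have hz1 : circleMap 0 1 (φ s) = E*(circleMap 0 1 s - a)/(1 - ca * circleMap 0 1 s) := by
      rw [hexpφ s, hu]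
    have hinv := (part1core (circleMap 0 1 s) (habs1 s)).2
    rw [hz1, hinv, hrsmul, smul_smul, smul_smul]
    have hscal : ((φ' s : ℂ) * (E*(circleMap 0 1 s - a)/(1 - ca*circleMap 0 1 s) * I))
          * (E*(1-ca*a)/(1 - ca*circleMap 0 1 s))⁻¹
        = circleMap 0 1 s * I / u s := by
      rw [hkey s]
      simp only [hu]
      field_simp [hE0, hba, hw0 s, hcaw _ (habs1 s), hwa s]
    have hmulR : (circleMap 0 1 s • (1:A) - T)
        * Ring.inverse (circleMap 0 1 s • (1:A) - T) = 1 :=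
      Ring.mul_inverse_cancel _ (hT _ (habs1 s))
    rw [sub_mul, smul_mul_assoc, one_mul] at hmulR
    have hmulR' : circleMap 0 1 s • Ring.inverse (circleMap 0 1 s • (1:A) - T)
        = 1 + T * Ring.inverse (circleMap 0 1 s • (1:A) - T) := sub_eq_iff_eq_add.mp hmulR
    have hTR : T * Ring.inverse (circleMap 0 1 s • (1:A) - T)
        = circleMap 0 1 s • Ring.inverse (circleMap 0 1 s • (1:A) - T) - 1 := by
      rw [hmulR']; abel
    have hSR : ((1:A) - ca•T) * Ring.inverse (circleMap 0 1 s • (1:A) - T)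
        = u s • Ring.inverse (circleMap 0 1 s • (1:A) - T) + ca • (1:A) := by
      rw [sub_mul, one_mul, smul_mul_assoc, hTR]
      simp only [hu]
      module
    rw [hscal, hSR]
    rw [smul_add, smul_smul, smul_smul]
    congr 1
    · congr 1
      rw [div_mul_eq_mul_div, mul_div_assoc, div_self (hu0 s), mul_one]
    · congr 1
      ring
  -- continuity of the integrands
  have hcontG : Continuous (fun t : ℝ => (circleMap 0 1 t * I) •
      Ring.inverse ((circleMap 0 1 t) • (1:A) - γT)) := by
    apply Continuous.smul ((continuous_circleMap 0 1).mul continuous_const)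
    rw [continuous_iff_continuousAt]
    intro t
    have hz := part1 _ (habs1 t)
    have h1 := NormedRing.inverse_continuousAt hz.unit
    rw [IsUnit.unit_spec] at h1
    have h2 : ContinuousAt (fun x : ℝ => circleMap 0 1 x • (1:A) - γT) t :=
      (((continuous_circleMap 0 1).smul continuous_const).sub continuous_const).continuousAt
    exact ContinuousAt.comp (f := fun x : ℝ => circleMap 0 1 x • (1:A) - γT) h1 h2
  have hcontH1 : Continuous (fun t : ℝ => (circleMap 0 1 t * I) •
      Ring.inverse ((circleMap 0 1 t) • (1:A) - T)) := by
    apply Continuous.smul ((continuous_circleMap 0 1).mul continuous_const)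
    rw [continuous_iff_continuousAt]
    intro t
    have hz := hT _ (habs1 t)
    have h1 := NormedRing.inverse_continuousAt hz.unit
    rw [IsUnit.unit_spec] at h1
    have h2 : ContinuousAt (fun x : ℝ => circleMap 0 1 x • (1:A) - T) t :=
      (((continuous_circleMap 0 1).smul continuous_const).sub continuous_const).continuousAt
    exact ContinuousAt.comp (f := fun x : ℝ => circleMap 0 1 x • (1:A) - T) h1 h2
  have hcontH2 : Continuous (fun t : ℝ => (circleMap 0 1 t * I * (ca / u t)) • (1:A)) :=
    (((continuous_circleMap 0 1).mul continuous_const).mul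
      (continuous_const.div hcontu hu0)).smul continuous_const
  -- periodicity and endpoints
  have hper : Function.Periodic (fun t : ℝ => (circleMap 0 1 t * I) •
      Ring.inverse ((circleMap 0 1 t) • (1:A) - γT)) (2*Real.pi) := by
    intro t
    simp only [periodic_circleMap 0 1 t]
  have hper0 : circleMap 0 1 (2*Real.pi) = circleMap 0 1 0 := by
    have h2 := periodic_circleMap 0 1 0
    rwa [zero_add] at h2
  have hφ2π : φ (2*Real.pi) = φ 0 + 2*Real.pi := by
    simp only [hphi, hu, hper0]
    ring
  -- the chain of integral identities
  have main : (∫ t in (0:ℝ)..(2*Real.pi), (circleMap 0 1 t * I) •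
        Ring.inverse ((circleMap 0 1 t) • (1:A) - γT))
      = (∫ t in (0:ℝ)..(2*Real.pi), (circleMap 0 1 t * I) •
          Ring.inverse ((circleMap 0 1 t) • (1:A) - T))
        + ∫ t in (0:ℝ)..(2*Real.pi), (circleMap 0 1 t * I * (ca / u t)) • (1:A) := by
    have step1 : (∫ t in (0:ℝ)..(2*Real.pi), (circleMap 0 1 t * I) •
          Ring.inverse ((circleMap 0 1 t) • (1:A) - γT))
        = ∫ t in (φ 0)..(φ (2*Real.pi)), (circleMap 0 1 t * I) •
            Ring.inverse ((circleMap 0 1 t) • (1:A) - γT) := by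
      rw [hφ2π]
      have h2 := hper.intervalIntegral_add_eq (φ 0) 0
      rw [zero_add] at h2
      exact h2.symm
    have step2 : (∫ t in (φ 0)..(φ (2*Real.pi)), (circleMap 0 1 t * I) •
          Ring.inverse ((circleMap 0 1 t) • (1:A) - γT))
        = ∫ s in (0:ℝ)..(2*Real.pi), φ' s • ((circleMap 0 1 (φ s) * I) •
            Ring.inverse ((circleMap 0 1 (φ s)) • (1:A) - γT)) :=
      (intervalIntegral.integral_comp_smul_deriv' (fun x _ => hphidiff x)
        hcontφ'.continuousOn hcontG.continuousOn).symm
    have step3 : (∫ s in (0:ℝ)..(2*Real.pi), φ' s • ((circleMap 0 1 (φ s) * I) •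
          Ring.inverse ((circleMap 0 1 (φ s)) • (1:A) - γT)))
        = ∫ s in (0:ℝ)..(2*Real.pi), ((circleMap 0 1 s * I) •
            Ring.inverse ((circleMap 0 1 s) • (1:A) - T)
          + (circleMap 0 1 s * I * (ca / u s)) • (1:A)) :=
      intervalIntegral.integral_congr (fun s _ => hpoint s)
    rw [step1, step2, step3,
      intervalIntegral.integral_add (hcontH1.intervalIntegrable 0 (2*Real.pi))
        (hcontH2.intervalIntegrable 0 (2*Real.pi))]
  -- the extra term vanishes by Cauchy's theorem
  have hne : ∀ z : ℂ, z ∈ Metric.closedBall (0:ℂ) 1 → 1 - ca * z ≠ 0 := by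
    intro z hz h
    rw [Metric.mem_closedBall, dist_zero_right] at hz
    have h2 : (1:ℂ) = ca * z := by linear_combination h
    have h3 := congrArg Norm.norm h2
    rw [norm_one, norm_mul, hca, Complex.norm_conj] at h3
    nlinarith [norm_nonneg a, norm_nonneg z]
  have hf : (∮ z in C(0,1), (ca/(1 - ca*z)) • (1:A)) = 0 := by
    refine circleIntegral_eq_zero_of_differentiable_on_off_countable zero_le_one
      Set.countable_empty ?_ ?_
    · exact (continuousOn_const.div
        ((continuous_const.sub (continuous_const.mul continuous_id)).continuousOn) hne).smul
        continuousOn_const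
    · intro z hz
      exact (((differentiableAt_const ca).div
        ((differentiableAt_const (1:ℂ)).sub ((differentiableAt_const ca).mul differentiableAt_id))
        (hne z (Metric.ball_subset_closedBall hz.1)))).smul_const (1:A)
  have hzero : (∫ t in (0:ℝ)..(2*Real.pi), (circleMap 0 1 t * I * (ca / u t)) • (1:A)) = 0 := by
    rw [← hf]
    simp only [circleIntegral, deriv_circleMap, smul_smul, hu]
  -- conclude
  show (∮ z in C(0,1), Ring.inverse (z • (1:A) - γT))
      = ∮ w in C(0,1), Ring.inverse (w • (1:A) - T)
  simp only [circleIntegral, deriv_circleMap]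
  rw [main, hzero, add_zero]
end
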